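/- arXiv:1309.6303 — 8 statements merged into one kernel-verified Lean document; each statement's English description precedes it below -/
import Mathlib

section
/- For every k ≥ 0, with k₀ = √(k² + m²a₀²), the regularized energy integrand at the initial time satisfies ( |χ_k'(τ₀)|² + (k² + m²a₀²)|χ_k(τ₀)|² ) − ( |χ_{k,0}'(τ₀)|² + (k² + m²a₀²)|χ_{k,0}(τ₀)|² ) = − m⁴ a₀² a'(τ₀)² / (8 (k² + m²a₀²)^{5/2}). Consequently the integral ∫₀^∞ [ ( |χ_k'(τ₀)|² + (k² + m²a₀²)|χ_k(τ₀)|² ) − ( |χ_{k,0}'(τ₀)|² + (k² + m²a₀²)|χ_{k,0}(τ₀)|² ) ] k² dk converges absolutely and equals −(m⁴ a₀² a'(τ₀)²/8) ∫₀^∞ k² (k² + m²a₀²)^{-5/2} dk, which is finite. -/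
open MeasureTheory Filter Set Topology

noncomputable section

namespace SCE


/-- `k₀ = √(k² + a₀² m²)`. -/
def k0 (m a0 k : ℝ) : ℝ := Real.sqrt (k ^ 2 + a0 ^ 2 * m ^ 2)

/-- The initial value `χ_k(τ₀) = (2k₀)^{-1/2} e^{i k₀ τ₀}` of the modes. -/
def chiInit (m a0 τ0 k : ℝ) : ℂ :=
  (Real.sqrt (2 * k0 m a0 k) : ℂ)⁻¹ * Complex.exp (Complex.I * (k0 m a0 k) * τ0)

/-- The initial value `χ_k'(τ₀) = i k₀ (2k₀)^{-1/2} e^{i k₀ τ₀}` of the derivatives of the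
modes. -/
def chiInitDeriv (m a0 τ0 k : ℝ) : ℂ :=
  Complex.I * (k0 m a0 k) * chiInit m a0 τ0 k

/-- Parker's adiabatic modes of order zero:
`χ_{k,0}(τ) = 2^{-1/2}(k² + m²a(τ)²)^{-1/4} exp(i ∫_{τ₀}^τ √(k² + m²a(η)²) dη)`. -/
def chiAd (m τ0 : ℝ) (a : ℝ → ℝ) (k τ : ℝ) : ℂ :=
  (((Real.sqrt 2)⁻¹ * (k ^ 2 + m ^ 2 * (a τ) ^ 2) ^ (-(1 / 4) : ℝ) : ℝ) : ℂ) *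
    Complex.exp (Complex.I *
      ((∫ η in τ0..τ, Real.sqrt (k ^ 2 + m ^ 2 * (a η) ^ 2) : ℝ) : ℂ))

/-- The adiabatically regularized energy integrand at the initial time `τ₀`
(the derivative of `χ_{k,0}` being the derivative within `[τ₀,τ₁]` at `τ₀`):
`(|χ_k'(τ₀)|² + (k² + m²a₀²)|χ_k(τ₀)|²) − (|χ_{k,0}'(τ₀)|² + (k² + m²a₀²)|χ_{k,0}(τ₀)|²)`. -/
def energyDiff (m τ0 τ1 : ℝ) (a : ℝ → ℝ) (k : ℝ) : ℝ :=
  (‖chiInitDeriv m (a τ0) τ0 k‖ ^ 2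
      + (k ^ 2 + m ^ 2 * (a τ0) ^ 2) * ‖chiInit m (a τ0) τ0 k‖ ^ 2)
    - (‖derivWithin (chiAd m τ0 a k) (Set.Icc τ0 τ1) τ0‖ ^ 2
      + (k ^ 2 + m ^ 2 * (a τ0) ^ 2) * ‖chiAd m τ0 a k τ0‖ ^ 2)

lemma ofReal_hasDerivWithinAt {f : ℝ → ℝ} {u x : ℝ} {s : Set ℝ}
    (hf : HasDerivWithinAt f u s x) :
    HasDerivWithinAt (fun y : ℝ => ((f y : ℂ))) (u : ℂ) s x := by
  exact hf.ofReal_comp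

lemma normsq_aux (Ad A0 s : ℝ) :
    ‖((Ad : ℝ) : ℂ) + ((A0 : ℝ) : ℂ) * (Complex.I * (s : ℂ))‖ ^ 2
      = Ad ^ 2 + A0 ^ 2 * s ^ 2 := by
  rw [Complex.sq_norm, Complex.normSq_apply]
  simp
  ring

lemma key (m τ0 τ1 : ℝ) (hm : 0 < m) (hτ : τ0 < τ1)
    (a a' : ℝ → ℝ)
    (hader : ∀ τ ∈ Set.Icc τ0 τ1, HasDerivWithinAt a (a' τ) (Set.Icc τ0 τ1) τ)
    (hapos : ∀ τ ∈ Set.Icc τ0 τ1, 0 < a τ) (k : ℝ) :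
    HasDerivWithinAt (chiAd m τ0 a k)
        (derivWithin (chiAd m τ0 a k) (Set.Icc τ0 τ1) τ0) (Set.Icc τ0 τ1) τ0 ∧
    energyDiff m τ0 τ1 a k
      = -(m ^ 4 * (a τ0) ^ 2 * (a' τ0) ^ 2)
          / (8 * (k ^ 2 + m ^ 2 * (a τ0) ^ 2) ^ ((5 : ℝ) / 2)) := by
  have h0 : τ0 ∈ Set.Icc τ0 τ1 := ⟨le_rfl, hτ.le⟩
  have ha0 : 0 < a τ0 := hapos τ0 h0
  set X : ℝ := k ^ 2 + m ^ 2 * (a τ0) ^ 2 with hXdef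
  have hX : 0 < X := by positivity
  set s : ℝ := Real.sqrt X with hsdef
  have hs : 0 < s := Real.sqrt_pos.mpr hX
  have hs2 : s ^ 2 = X := Real.sq_sqrt hX.le
  have hacont : ContinuousOn a (Set.Icc τ0 τ1) :=
    fun τ hτ' => (hader τ hτ').continuousWithinAt
  have hωcont : ContinuousOn (fun η => Real.sqrt (k ^ 2 + m ^ 2 * (a η) ^ 2))
      (Set.Icc τ0 τ1) :=
    (continuousOn_const.add (continuousOn_const.mul (hacont.pow 2))).sqrt
  have hInt : HasDerivWithinAt
      (fun τ => ∫ η in τ0..τ, Real.sqrt (k ^ 2 + m ^ 2 * (a η) ^ 2)) s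
      (Set.Icc τ0 τ1) τ0 := by
    have hmeas : StronglyMeasurableAtFilter
        (fun η => Real.sqrt (k ^ 2 + m ^ 2 * (a η) ^ 2)) (𝓝[>] τ0) volume :=
      ⟨Set.Icc τ0 τ1, Icc_mem_nhdsGT hτ,
        hωcont.aestronglyMeasurable measurableSet_Icc⟩
    have hcw : ContinuousWithinAt (fun η => Real.sqrt (k ^ 2 + m ^ 2 * (a η) ^ 2))
        (Set.Ioi τ0) τ0 :=
      (hωcont τ0 h0).mono_of_mem_nhdsWithin (Icc_mem_nhdsGT hτ)
    exact (intervalIntegral.integral_hasDerivWithinAt_right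
      (IntervalIntegrable.refl) hmeas hcw).mono Set.Icc_subset_Ici_self
  set W' : ℝ := 2 * m ^ 2 * a τ0 * a' τ0 with hW'def
  have hW : HasDerivWithinAt (fun τ => k ^ 2 + m ^ 2 * (a τ) ^ 2) W'
      (Set.Icc τ0 τ1) τ0 := by
    have := (((hader τ0 h0).pow 2).const_mul (m ^ 2)).const_add (k ^ 2)
    exact this.congr_deriv (by rw [hW'def]; norm_num <;> ring)
  set Ad : ℝ := (Real.sqrt 2)⁻¹ * (W' * (-(1 / 4)) * X ^ ((-(1 / 4) : ℝ) - 1))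
    with hAddef
  have hA : HasDerivWithinAt
      (fun τ => (Real.sqrt 2)⁻¹ * (k ^ 2 + m ^ 2 * (a τ) ^ 2) ^ (-(1 / 4) : ℝ))
      Ad (Set.Icc τ0 τ1) τ0 :=
    (hW.rpow_const (Or.inl hX.ne')).const_mul _
  have hchi : HasDerivWithinAt (chiAd m τ0 a k)
      (((Ad : ℝ) : ℂ) * Complex.exp (Complex.I *
          ((∫ η in τ0..τ0, Real.sqrt (k ^ 2 + m ^ 2 * (a η) ^ 2) : ℝ) : ℂ))
        + (((Real.sqrt 2)⁻¹ * (k ^ 2 + m ^ 2 * (a τ0) ^ 2) ^ (-(1 / 4) : ℝ) : ℝ) : ℂ) *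
          (Complex.exp (Complex.I *
            ((∫ η in τ0..τ0, Real.sqrt (k ^ 2 + m ^ 2 * (a η) ^ 2) : ℝ) : ℂ)) *
           (Complex.I * (s : ℂ))))
      (Set.Icc τ0 τ1) τ0 :=
    (ofReal_hasDerivWithinAt hA).mul
      (((ofReal_hasDerivWithinAt hInt).const_mul Complex.I).cexp)
  have hD : (((Ad : ℝ) : ℂ) * Complex.exp (Complex.I *
          ((∫ η in τ0..τ0, Real.sqrt (k ^ 2 + m ^ 2 * (a η) ^ 2) : ℝ) : ℂ))
        + (((Real.sqrt 2)⁻¹ * (k ^ 2 + m ^ 2 * (a τ0) ^ 2) ^ (-(1 / 4) : ℝ) : ℝ) : ℂ) *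
          (Complex.exp (Complex.I *
            ((∫ η in τ0..τ0, Real.sqrt (k ^ 2 + m ^ 2 * (a η) ^ 2) : ℝ) : ℂ)) *
           (Complex.I * (s : ℂ))))
      = ((Ad : ℝ) : ℂ)
        + (((Real.sqrt 2)⁻¹ * X ^ (-(1 / 4) : ℝ) : ℝ) : ℂ) * (Complex.I * (s : ℂ)) := by
    simp [intervalIntegral.integral_same, hXdef]
  rw [hD] at hchi
  have hud : UniqueDiffWithinAt ℝ (Set.Icc τ0 τ1) τ0 := uniqueDiffOn_Icc hτ τ0 h0
  have hder := hchi.derivWithin hud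
  refine ⟨by rw [hder]; exact hchi, ?_⟩
  -- norms
  have hk0 : k0 m (a τ0) k = s := by
    rw [k0, hsdef]
    congr 1
    rw [hXdef]; ring
  have nInit : ‖chiInit m (a τ0) τ0 k‖ ^ 2 = (2 * s)⁻¹ := by
    rw [chiInit, hk0, norm_mul, norm_inv]
    simp [Complex.norm_exp, Complex.norm_real,
      abs_of_nonneg (Real.sqrt_nonneg _)]
    rw [mul_pow, inv_pow, inv_pow, Real.sq_sqrt hs.le,
      Real.sq_sqrt (by norm_num : (0:ℝ) ≤ 2)]
  have nInitD : ‖chiInitDeriv m (a τ0) τ0 k‖ ^ 2 = s ^ 2 * (2 * s)⁻¹ := by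
    rw [chiInitDeriv, hk0, norm_mul, mul_pow, nInit]
    congr 1
    rw [norm_mul]
    simp [Complex.norm_real, abs_of_nonneg hs.le]
  have hA0 : ((Real.sqrt 2)⁻¹ * X ^ (-(1 / 4) : ℝ)) ^ 2 = (2 * s)⁻¹ := by
    have h2 : (X ^ (-(1/4):ℝ))^2 = X ^ (-(1/2):ℝ) := by
      rw [← Real.rpow_natCast (X ^ _) 2, ← Real.rpow_mul hX.le]
      norm_num
    rw [mul_pow, inv_pow, Real.sq_sqrt (by norm_num : (0:ℝ) ≤ 2), h2,
      Real.rpow_neg hX.le, ← Real.sqrt_eq_rpow, ← hsdef, mul_inv]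
  have nAd : ‖chiAd m τ0 a k τ0‖ ^ 2 = (2 * s)⁻¹ := by
    rw [chiAd, intervalIntegral.integral_same]
    rw [norm_mul]
    simp only [Complex.ofReal_zero, mul_zero, Complex.exp_zero, norm_one, mul_one]
    rw [Complex.norm_real, Real.norm_eq_abs,
      abs_of_nonneg (mul_nonneg (inv_nonneg.mpr (Real.sqrt_nonneg 2))
        (Real.rpow_nonneg hX.le _)), hA0]
  have nD : ‖((Ad : ℝ) : ℂ)
        + (((Real.sqrt 2)⁻¹ * X ^ (-(1 / 4) : ℝ) : ℝ) : ℂ) * (Complex.I * (s : ℂ))‖ ^ 2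
      = Ad ^ 2 + ((Real.sqrt 2)⁻¹ * X ^ (-(1 / 4) : ℝ)) ^ 2 * s ^ 2 :=
    normsq_aux _ _ _
  have hexp2 : (X ^ ((-(1 / 4) : ℝ) - 1)) ^ 2 = (X ^ ((5:ℝ)/2))⁻¹ := by
    rw [← Real.rpow_natCast (X ^ _) 2, ← Real.rpow_mul hX.le, ← Real.rpow_neg hX.le]
    norm_num
  have hAdsq : Ad ^ 2 = (m ^ 4 * (a τ0) ^ 2 * (a' τ0) ^ 2) / (8 * X ^ ((5:ℝ)/2)) := by
    rw [hAddef, hW'def]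
    simp only [mul_pow, inv_pow]
    rw [Real.sq_sqrt (by norm_num : (0:ℝ) ≤ 2), hexp2]
    have hY : X ^ ((5:ℝ)/2) ≠ 0 := (Real.rpow_pos_of_pos hX _).ne'
    field_simp
    ring
  rw [energyDiff, hder, ← hXdef, nInit, nInitD, nAd, nD, hA0, hs2, hAdsq]
  ring

/-- **Finiteness of the energy density at the initial time** (Pinamonti–Siemssen,
Proposition 2.3): the regularized energy integrand at `τ₀` equals
`−m⁴a₀²a'(τ₀)²/(8(k² + m²a₀²)^{5/2})`, hence
`∫₀^∞ (…) k² dk` converges absolutely and equals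
`−(m⁴a₀²a'(τ₀)²/8) ∫₀^∞ k²(k² + m²a₀²)^{-5/2} dk`, which is finite. -/
theorem energy_density_finite (m τ0 τ1 : ℝ) (hm : 0 < m) (hτ : τ0 < τ1)
    (a a' : ℝ → ℝ)
    (hader : ∀ τ ∈ Set.Icc τ0 τ1, HasDerivWithinAt a (a' τ) (Set.Icc τ0 τ1) τ)
    (ha'cont : ContinuousOn a' (Set.Icc τ0 τ1))
    (hapos : ∀ τ ∈ Set.Icc τ0 τ1, 0 < a τ) :
    (∀ k : ℝ, 0 ≤ k →
      HasDerivWithinAt (chiAd m τ0 a k)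
          (derivWithin (chiAd m τ0 a k) (Set.Icc τ0 τ1) τ0) (Set.Icc τ0 τ1) τ0 ∧
      energyDiff m τ0 τ1 a k
        = -(m ^ 4 * (a τ0) ^ 2 * (a' τ0) ^ 2)
            / (8 * (k ^ 2 + m ^ 2 * (a τ0) ^ 2) ^ ((5 : ℝ) / 2))) ∧
    IntegrableOn (fun k => energyDiff m τ0 τ1 a k * k ^ 2) (Set.Ioi (0 : ℝ)) ∧
    (∫ k in Set.Ioi (0 : ℝ), energyDiff m τ0 τ1 a k * k ^ 2)
      = -(m ^ 4 * (a τ0) ^ 2 * (a' τ0) ^ 2 / 8) *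
          ∫ k in Set.Ioi (0 : ℝ), k ^ 2 * (k ^ 2 + m ^ 2 * (a τ0) ^ 2) ^ (-(5 : ℝ) / 2) ∧
    IntegrableOn (fun k => k ^ 2 * (k ^ 2 + m ^ 2 * (a τ0) ^ 2) ^ (-(5 : ℝ) / 2))
      (Set.Ioi (0 : ℝ)) := by
  have h0 : τ0 ∈ Set.Icc τ0 τ1 := ⟨le_rfl, hτ.le⟩
  have ha0 : 0 < a τ0 := hapos τ0 h0
  have hkey := key m τ0 τ1 hm hτ a a' hader hapos
  have hXpos : ∀ k : ℝ, 0 < k ^ 2 + m ^ 2 * (a τ0) ^ 2 := fun k => by positivity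
  have hgcont : Continuous
      (fun k : ℝ => k ^ 2 * (k ^ 2 + m ^ 2 * (a τ0) ^ 2) ^ (-(5 : ℝ) / 2)) :=
    (continuous_pow 2).mul
      (((continuous_pow 2).add continuous_const).rpow_const
        (fun k => Or.inl (hXpos k).ne'))
  have hgint : IntegrableOn
      (fun k : ℝ => k ^ 2 * (k ^ 2 + m ^ 2 * (a τ0) ^ 2) ^ (-(5 : ℝ) / 2))
      (Set.Ioi 0) := by
    have h1 : IntegrableOn
        (fun k : ℝ => k ^ 2 * (k ^ 2 + m ^ 2 * (a τ0) ^ 2) ^ (-(5 : ℝ) / 2))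
        (Set.Ioc (0:ℝ) 1) := hgcont.integrableOn_Ioc
    have h2 : IntegrableOn
        (fun k : ℝ => k ^ 2 * (k ^ 2 + m ^ 2 * (a τ0) ^ 2) ^ (-(5 : ℝ) / 2))
        (Set.Ioi (1:ℝ)) := by
      have hmaj : IntegrableOn (fun k : ℝ => k ^ ((-3 : ℝ))) (Set.Ioi (1:ℝ)) :=
        integrableOn_Ioi_rpow_of_lt (by norm_num) one_pos
      refine hmaj.mono' hgcont.aestronglyMeasurable.restrict ?_
      filter_upwards [ae_restrict_mem measurableSet_Ioi] with x hx
      have hx1 : (1:ℝ) ≤ x := le_of_lt hx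
      have hx0 : (0:ℝ) < x := lt_of_lt_of_le one_pos hx1
      rw [Real.norm_eq_abs, abs_of_nonneg (by positivity)]
      calc x ^ 2 * (x ^ 2 + m ^ 2 * (a τ0) ^ 2) ^ (-(5 : ℝ) / 2)
          ≤ x ^ 2 * (x ^ 2) ^ (-(5 : ℝ) / 2) := by
            refine mul_le_mul_of_nonneg_left ?_ (by positivity)
            exact Real.rpow_le_rpow_of_nonpos (by positivity) (le_add_of_nonneg_right (by positivity))
              (by norm_num)
        _ = x ^ ((-3 : ℝ)) := by
            rw [← Real.rpow_natCast x 2, ← Real.rpow_mul hx0.le, ← Real.rpow_add hx0]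
            norm_num
    have := h1.union h2
    rwa [Set.Ioc_union_Ioi_eq_Ioi zero_le_one] at this
  have heqOn : Set.EqOn (fun k => energyDiff m τ0 τ1 a k * k ^ 2)
      (fun k => -(m ^ 4 * (a τ0) ^ 2 * (a' τ0) ^ 2 / 8) *
        (k ^ 2 * (k ^ 2 + m ^ 2 * (a τ0) ^ 2) ^ (-(5 : ℝ) / 2)))
      (Set.Ioi (0:ℝ)) := by
    intro x hx
    have hx0 : (0:ℝ) ≤ x := (le_of_lt hx)
    simp only
    rw [(hkey x).2]
    have hY : (0:ℝ) < (x ^ 2 + m ^ 2 * (a τ0) ^ 2) ^ ((5:ℝ)/2) :=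
      Real.rpow_pos_of_pos (hXpos x) _
    have hneg : (x ^ 2 + m ^ 2 * (a τ0) ^ 2) ^ (-(5 : ℝ) / 2)
        = ((x ^ 2 + m ^ 2 * (a τ0) ^ 2) ^ ((5 : ℝ) / 2))⁻¹ := by
      rw [← Real.rpow_neg (hXpos x).le]
      norm_num
    rw [hneg]
    field_simp
  refine ⟨fun k _ => hkey k, ?_, ?_, hgint⟩
  · exact IntegrableOn.congr_fun (hgint.const_mul _) heqOn.symm measurableSet_Ioi
  · rw [setIntegral_congr_fun measurableSet_Ioi heqOn, MeasureTheory.integral_const_mul]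


end SCE
end
end

section
/- Suppose U ⊆ C[a,b] is nonempty and closed, F(U) ⊆ U, and there exists K ≥ 0 such that ‖f(X) − f(Y)‖_{C[a,t]} ≤ K ‖X − Y‖_{C[a,t]} for all X, Y ∈ U and all t ∈ [a,b]. Then there exists N ∈ ℕ such that for every n ≥ N the n-fold iterate Fⁿ is a contraction on U, i.e., there is c ∈ (0,1) with ‖Fⁿ(X) − Fⁿ(Y)‖_{C[a,b]} ≤ c ‖X − Y‖_{C[a,b]} for all X, Y ∈ U; in consequence F has a unique fixed point in U. -/
open MeasureTheory Filter Set Topology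

noncomputable section

namespace Volterra

/-- A map `f : C[a,b] → C[a,b]` is *retarded* if, whenever two functions agree on `[a,t]`,
their images under `f` agree on `[a,t]`. -/
def Retarded (a b : ℝ) (f : C(Set.Icc a b, ℝ) → C(Set.Icc a b, ℝ)) : Prop :=
  ∀ X Y : C(Set.Icc a b, ℝ), ∀ t ∈ Set.Icc a b,
    (∀ s : Set.Icc a b, (s : ℝ) ≤ t → X s = Y s) →
      ∀ s : Set.Icc a b, (s : ℝ) ≤ t → f X s = f Y s

/-- The Volterra-type map `F(X)(t) = F₀(t) + ∫_a^t f(X)(s) ds` on `C[a,b]`. -/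
def Fmap (a b : ℝ) (hab : a ≤ b) (F0 : C(Set.Icc a b, ℝ))
    (f : C(Set.Icc a b, ℝ) → C(Set.Icc a b, ℝ)) (X : C(Set.Icc a b, ℝ)) :
    C(Set.Icc a b, ℝ) :=
  ⟨fun t => F0 t + ∫ s in a..(t : ℝ), Set.IccExtend hab ⇑(f X) s, by
    refine F0.continuous.add ?_
    have hg : Continuous (Set.IccExtend hab ⇑(f X)) := (f X).continuous.Icc_extend'
    exact (intervalIntegral.continuous_primitive (fun c d => hg.intervalIntegrable c d) a).comp
      continuous_subtype_val⟩

/-- Restriction of a continuous function on `[a,b]` to `[a,t]` (using the continuous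
extension to `ℝ`, which agrees with the original function on `[a,b]`). -/
def restrictTo (a b t : ℝ) (hab : a ≤ b) (X : C(Set.Icc a b, ℝ)) : C(Set.Icc a t, ℝ) :=
  ⟨fun s => Set.IccExtend hab ⇑X s, (X.continuous.Icc_extend').comp continuous_subtype_val⟩

/-- The sup norm `‖X‖_{C[a,t]}` of `X ∈ C[a,b]` over the part of `[a,b]` with `s ≤ t`. -/
def normOn (a b t : ℝ) (X : C(Set.Icc a b, ℝ)) : ℝ :=
  sSup {r : ℝ | ∃ s : Set.Icc a b, (s : ℝ) ≤ t ∧ r = |X s|}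

end Volterra

namespace Volterra

variable {a b : ℝ}

lemma normOn_le {t M : ℝ} (X : C(Set.Icc a b, ℝ)) (hM : 0 ≤ M)
    (h : ∀ s : Set.Icc a b, (s : ℝ) ≤ t → |X s| ≤ M) : normOn a b t X ≤ M :=
  Real.sSup_le (by rintro r ⟨s, hs, rfl⟩; exact h s hs) hM

lemma bddAbove_normOn_set (t : ℝ) (X : C(Set.Icc a b, ℝ)) :
    BddAbove {r : ℝ | ∃ s : Set.Icc a b, (s : ℝ) ≤ t ∧ r = |X s|} := by
  refine ⟨‖X‖, ?_⟩
  rintro r ⟨s, hs, rfl⟩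
  simpa [Real.norm_eq_abs] using X.norm_coe_le_norm s

lemma abs_le_normOn {t : ℝ} (X : C(Set.Icc a b, ℝ)) (s : Set.Icc a b) (hs : (s : ℝ) ≤ t) :
    |X s| ≤ normOn a b t X :=
  le_csSup (bddAbove_normOn_set t X) ⟨s, hs, rfl⟩

lemma normOn_nonneg (hab : a ≤ b) {t : ℝ} (hta : a ≤ t) (X : C(Set.Icc a b, ℝ)) :
    0 ≤ normOn a b t X :=
  (abs_nonneg _).trans (abs_le_normOn X ⟨a, le_refl a, hab⟩ hta)

lemma norm_eq_normOn (hab : a ≤ b) (X : C(Set.Icc a b, ℝ)) : ‖X‖ = normOn a b b X := by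
  refine le_antisymm ?_ (normOn_le X (norm_nonneg X) fun s _ => by
    simpa [Real.norm_eq_abs] using X.norm_coe_le_norm s)
  refine (ContinuousMap.norm_le X (normOn_nonneg hab hab X)).2 fun s => ?_
  simpa [Real.norm_eq_abs] using abs_le_normOn X s s.2.2

set_option maxHeartbeats 1000000 in
/-- The key Picard-type estimate on iterates of the Volterra map. -/
lemma key_estimate (a b : ℝ) (hab : a ≤ b) (F0 : C(Set.Icc a b, ℝ))
    (f : C(Set.Icc a b, ℝ) → C(Set.Icc a b, ℝ))
    (U : Set C(Set.Icc a b, ℝ))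
    (hinv : Set.MapsTo (Fmap a b hab F0 f) U U)
    (K : ℝ) (hK : 0 ≤ K)
    (hLip : ∀ X ∈ U, ∀ Y ∈ U, ∀ t ∈ Set.Icc a b,
      normOn a b t (f X - f Y) ≤ K * normOn a b t (X - Y)) :
    ∀ n : ℕ, ∀ X ∈ U, ∀ Y ∈ U, ∀ t ∈ Set.Icc a b,
      normOn a b t ((Fmap a b hab F0 f)^[n] X - (Fmap a b hab F0 f)^[n] Y)
        ≤ K ^ n * (t - a) ^ n / n.factorial * ‖X - Y‖ := by
  intro n
  induction n with
  | zero =>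
    intro X hX Y hY t ht
    simp only [Function.iterate_zero, id_eq, pow_zero, Nat.factorial_zero, Nat.cast_one,
      one_mul, mul_one, div_one]
    exact normOn_le _ (norm_nonneg _) fun s _ => by
      simpa [Real.norm_eq_abs] using (X - Y).norm_coe_le_norm s
  | succ n ih =>
    intro X hX Y hY t ht
    set G := Fmap a b hab F0 f with hGdef
    set A := G^[n] X with hAdef
    set B := G^[n] Y with hBdef
    have hA : A ∈ U := (hinv.iterate n) hX
    have hB : B ∈ U := (hinv.iterate n) hY
    have hta : (0:ℝ) ≤ t - a := sub_nonneg.2 ht.1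
    have hMnn : 0 ≤ K ^ (n + 1) * (t - a) ^ (n + 1) / (n + 1).factorial * ‖X - Y‖ := by
      positivity
    have hiter : ∀ Z : C(Set.Icc a b, ℝ), G^[n + 1] Z = G (G^[n] Z) := fun Z =>
      Function.iterate_succ_apply' G n Z
    rw [hiter X, hiter Y, ← hAdef, ← hBdef]
    refine normOn_le _ hMnn fun s hst => ?_
    have hsa : a ≤ (s : ℝ) := s.2.1
    have hcont1 : Continuous (Set.IccExtend hab ⇑(f A)) := (f A).continuous.Icc_extend'
    have hcont2 : Continuous (Set.IccExtend hab ⇑(f B)) := (f B).continuous.Icc_extend'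
    set φ : ℝ → ℝ := fun u => Set.IccExtend hab ⇑(f A) u - Set.IccExtend hab ⇑(f B) u
      with hφdef
    have hφ : Continuous φ := hcont1.sub hcont2
    have hval : (G A - G B) s = ∫ u in a..(s : ℝ), φ u := by
      rw [intervalIntegral.integral_sub (hcont1.intervalIntegrable _ _)
        (hcont2.intervalIntegrable _ _)]
      show (G A) s - (G B) s = _
      simp only [hGdef, Fmap, ContinuousMap.coe_mk]
      ring
    rw [hval]
    -- pointwise bound for the integrand
    have hbound : ∀ u ∈ Set.Icc a (s : ℝ),
        |φ u| ≤ K ^ (n + 1) * ‖X - Y‖ / n.factorial * (u - a) ^ n := by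
      intro u hu
      have hub : u ∈ Set.Icc a b := ⟨hu.1, hu.2.trans (hst.trans ht.2)⟩
      rw [hφdef]
      simp only [Set.IccExtend_of_mem hab _ hub]
      have h1 : |(f A) ⟨u, hub⟩ - (f B) ⟨u, hub⟩| ≤ normOn a b u (f A - f B) := by
        simpa using abs_le_normOn (f A - f B) ⟨u, hub⟩ (le_refl u)
      have h2 := hLip A hA B hB u hub
      have h3 := ih X hX Y hY u hub
      have h4 : normOn a b u (A - B) ≤ K ^ n * (u - a) ^ n / n.factorial * ‖X - Y‖ := h3
      calc |(f A) ⟨u, hub⟩ - (f B) ⟨u, hub⟩|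
          ≤ K * normOn a b u (A - B) := h1.trans h2
        _ ≤ K * (K ^ n * (u - a) ^ n / n.factorial * ‖X - Y‖) :=
            mul_le_mul_of_nonneg_left h4 hK
        _ = K ^ (n + 1) * ‖X - Y‖ / n.factorial * (u - a) ^ n := by ring
    have hint_pow : ∫ u in a..(s : ℝ), (u - a) ^ n = ((s : ℝ) - a) ^ (n + 1) / (n + 1) := by
      rw [show (∫ u in a..(s : ℝ), (u - a) ^ n)
          = ∫ u in a - a..(s : ℝ) - a, u ^ n from
        intervalIntegral.integral_comp_sub_right (fun u => u ^ n) a, integral_pow]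
      simp
    have hcb : Continuous fun u : ℝ =>
        K ^ (n + 1) * ‖X - Y‖ / n.factorial * (u - a) ^ n :=
      continuous_const.mul ((continuous_id.sub continuous_const).pow n)
    calc |∫ u in a..(s : ℝ), φ u|
        ≤ ∫ u in a..(s : ℝ), |φ u| := by
          have h := intervalIntegral.norm_integral_le_integral_norm
            (f := φ) (μ := volume) hsa
          simpa [Real.norm_eq_abs] using h
      _ ≤ ∫ u in a..(s : ℝ), K ^ (n + 1) * ‖X - Y‖ / n.factorial * (u - a) ^ n :=
          intervalIntegral.integral_mono_on hsa
            ((hφ.abs).intervalIntegrable _ _)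
            (hcb.intervalIntegrable _ _)
            hbound
      _ = K ^ (n + 1) * ‖X - Y‖ / n.factorial * (((s : ℝ) - a) ^ (n + 1) / (n + 1)) := by
          rw [intervalIntegral.integral_const_mul, hint_pow]
      _ ≤ K ^ (n + 1) * ‖X - Y‖ / n.factorial * ((t - a) ^ (n + 1) / (n + 1)) := by
          have hsa' : (0:ℝ) ≤ (s : ℝ) - a := sub_nonneg.2 hsa
          have hst' : (s : ℝ) - a ≤ t - a := by linarith
          gcongr
      _ = K ^ (n + 1) * (t - a) ^ (n + 1) / (n + 1).factorial * ‖X - Y‖ := by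
          rw [Nat.factorial_succ]
          push_cast
          field_simp

/-- **Iterates of the Volterra map are eventually contractions.**
If `U ⊆ C[a,b]` is nonempty and closed, `F(U) ⊆ U`, and `f` satisfies the retarded Lipschitz
estimate `‖f(X) − f(Y)‖_{C[a,t]} ≤ K ‖X − Y‖_{C[a,t]}` on `U`, then some iterate `Fⁿ` (for all
`n` large enough) is a contraction on `U`, and consequently `F` has a unique fixed point
in `U`. -/
theorem iterate_contraction_and_unique_fixed_point
    (a b : ℝ) (hab : a < b) (F0 : C(Set.Icc a b, ℝ))
    (f : C(Set.Icc a b, ℝ) → C(Set.Icc a b, ℝ)) (hf : Retarded a b f)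
    (U : Set C(Set.Icc a b, ℝ)) (hne : U.Nonempty) (hclosed : IsClosed U)
    (hinv : Set.MapsTo (Fmap a b hab.le F0 f) U U)
    (K : ℝ) (hK : 0 ≤ K)
    (hLip : ∀ X ∈ U, ∀ Y ∈ U, ∀ t ∈ Set.Icc a b,
      normOn a b t (f X - f Y) ≤ K * normOn a b t (X - Y)) :
    (∃ N : ℕ, ∀ n : ℕ, N ≤ n → ∃ c ∈ Set.Ioo (0:ℝ) 1,
        ∀ X ∈ U, ∀ Y ∈ U,
          ‖(Fmap a b hab.le F0 f)^[n] X - (Fmap a b hab.le F0 f)^[n] Y‖ ≤ c * ‖X - Y‖) ∧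
      ∃! X : C(Set.Icc a b, ℝ), X ∈ U ∧ Fmap a b hab.le F0 f X = X := by
  set G := Fmap a b hab.le F0 f with hGdef
  have key := key_estimate a b hab.le F0 f U hinv K hK hLip
  -- choose N with (K(b-a))^n / n! < 1/2 for all n ≥ N
  obtain ⟨N, hN⟩ : ∃ N : ℕ, ∀ n : ℕ, N ≤ n → (K * (b - a)) ^ n / n.factorial < 1 / 2 := by
    have h := FloorSemiring.tendsto_pow_div_factorial_atTop (K := ℝ) (K * (b - a))
    exact eventually_atTop.1 (h.eventually (gt_mem_nhds (by norm_num : (0:ℝ) < 1 / 2)))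
  have hcontr : ∀ n : ℕ, N ≤ n → ∀ X ∈ U, ∀ Y ∈ U,
      ‖G^[n] X - G^[n] Y‖ ≤ 1 / 2 * ‖X - Y‖ := by
    intro n hn X hX Y hY
    have h1 := key n X hX Y hY b ⟨hab.le, le_refl b⟩
    rw [norm_eq_normOn hab.le (G^[n] X - G^[n] Y)]
    refine h1.trans ?_
    have h2 : K ^ n * (b - a) ^ n / n.factorial ≤ 1 / 2 := by
      have := (hN n hn).le
      rwa [mul_pow] at this
    exact mul_le_mul_of_nonneg_right h2 (norm_nonneg _)
  constructor
  · exact ⟨N, fun n hn => ⟨1 / 2, ⟨by norm_num, by norm_num⟩,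
      fun X hX Y hY => hcontr n hn X hX Y hY⟩⟩
  · -- unique fixed point via the contraction `G^[N+1]` on the complete space `U`
    haveI : Nonempty ↥U := hne.to_subtype
    haveI : CompleteSpace ↥U := hclosed.completeSpace_coe
    set m := N + 1 with hm
    have hmU : Set.MapsTo (G^[m]) U U := hinv.iterate m
    set g : ↥U → ↥U := fun x => ⟨G^[m] x.1, hmU x.2⟩ with hgdef
    have hg : ContractingWith (1 / 2 : NNReal) g := by
      constructor
      · exact_mod_cast (by norm_num : ((1:ℝ) / 2) < 1)
      · refine LipschitzWith.of_dist_le_mul fun x y => ?_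
        have h := hcontr m (Nat.le_succ N) x.1 x.2 y.1 y.2
        simp only [Subtype.dist_eq, dist_eq_norm]
        simpa using h
    set p : ↥U := ContractingWith.fixedPoint g hg with hp
    have hpfix : g p = p := hg.fixedPoint_isFixedPt
    have hpval : G^[m] p.1 = p.1 := congrArg Subtype.val hpfix
    have hGpU : G p.1 ∈ U := hinv p.2
    have hfixGp : g ⟨G p.1, hGpU⟩ = ⟨G p.1, hGpU⟩ := by
      apply Subtype.ext
      show G^[m] (G p.1) = G p.1
      rw [← Function.iterate_succ_apply G m p.1, Function.iterate_succ_apply' G m p.1, hpval]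
    have hGp : G p.1 = p.1 := by
      have := hg.fixedPoint_unique (x := (⟨G p.1, hGpU⟩ : ↥U)) hfixGp
      rw [← hp] at this
      exact congrArg Subtype.val this
    refine ⟨p.1, ⟨p.2, hGp⟩, ?_⟩
    rintro q ⟨hqU, hqfix⟩
    have hqiter : G^[m] q = q := (Function.IsFixedPt.iterate hqfix m)
    have hqfixg : g ⟨q, hqU⟩ = ⟨q, hqU⟩ := Subtype.ext hqiter
    have := hg.fixedPoint_unique (x := (⟨q, hqU⟩ : ↥U)) hqfixg
    rw [← hp] at this
    exact congrArg Subtype.val this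

end Volterra
end
end

section
/- For every n ≥ 0, every integer l with 0 ≤ l ≤ n, and every τ ∈ [τ₀, τ₁], the mode functions satisfy the bound |χⁿ(τ)| ≤ (2k₀)^{-1/2} (n!)^{-1} ( k₀^{-1} ∫_{τ₀}^τ |V(η)| dη )^l ( ∫_{τ₀}^τ (τ − η) |V(η)| dη )^{n−l}. -/
open MeasureTheory Filter Set Topology

noncomputable section

namespace Modes

/-- The perturbative mode functions: `χ⁰(τ) = (2k₀)^{-1/2} e^{i k₀ τ}` and, recursively,
`χⁿ(τ) = ∫_{τ₀}^τ k₀⁻¹ sin(k₀(η−τ)) V(η) χ^{n−1}(η) dη`. -/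
def chi (k0 τ0 : ℝ) (V : ℝ → ℝ) : ℕ → ℝ → ℂ
  | 0 => fun τ => (Real.sqrt (2 * k0) : ℂ)⁻¹ * Complex.exp (Complex.I * k0 * τ)
  | n + 1 => fun τ =>
      ∫ η in τ0..τ, ((k0⁻¹ * Real.sin (k0 * (η - τ)) * V η : ℝ) : ℂ) * chi k0 τ0 V n η

end Modes

namespace Modes

/-- **Bound on the perturbative modes** (eq. (10) of Pinamonti–Siemssen):
`|χⁿ(τ)| ≤ (2k₀)^{-1/2} (n!)⁻¹ (k₀⁻¹ ∫|V|)^l (∫(τ−η)|V|)^{n−l}` for every `0 ≤ l ≤ n`. -/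
theorem chi_bound (τ0 τ1 k0 : ℝ) (hτ : τ0 < τ1) (hk0 : 0 < k0)
    (V : ℝ → ℝ) (hV : ContinuousOn V (Set.Icc τ0 τ1)) :
    ∀ n l : ℕ, l ≤ n → ∀ τ ∈ Set.Icc τ0 τ1,
      ‖chi k0 τ0 V n τ‖ ≤
        (Real.sqrt (2 * k0))⁻¹ * ((n.factorial : ℝ))⁻¹ *
          (k0⁻¹ * ∫ η in τ0..τ, |V η|) ^ l *
          (∫ η in τ0..τ, (τ - η) * |V η|) ^ (n - l) := by
  -- a continuous global extension of `V`
  set g : ℝ → ℝ := fun x => V ((Set.projIcc τ0 τ1 hτ.le x : ℝ)) with hgdef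
  have hgcont : Continuous g :=
    (continuousOn_iff_continuous_restrict.mp hV).comp continuous_projIcc
  have hgV : ∀ x ∈ Set.Icc τ0 τ1, g x = V x := by
    intro x hx
    simp [hgdef, Set.projIcc_of_mem hτ.le hx]
  -- `chi` only depends on the values of `V` on `[τ0, τ1]`
  have congrchi : ∀ n : ℕ, ∀ τ ∈ Set.Icc τ0 τ1, chi k0 τ0 V n τ = chi k0 τ0 g n τ := by
    intro n
    induction n with
    | zero => intro τ _; rfl
    | succ n ih =>
      intro τ hτm
      show (∫ η in τ0..τ, ((k0⁻¹ * Real.sin (k0 * (η - τ)) * V η : ℝ) : ℂ) * chi k0 τ0 V n η)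
        = ∫ η in τ0..τ, ((k0⁻¹ * Real.sin (k0 * (η - τ)) * g η : ℝ) : ℂ) * chi k0 τ0 g n η
      apply intervalIntegral.integral_congr
      intro η hη
      rw [Set.uIcc_of_le hτm.1] at hη
      have hη' : η ∈ Set.Icc τ0 τ1 := ⟨hη.1, hη.2.trans hτm.2⟩
      show ((k0⁻¹ * Real.sin (k0 * (η - τ)) * V η : ℝ) : ℂ) * chi k0 τ0 V n η
        = ((k0⁻¹ * Real.sin (k0 * (η - τ)) * g η : ℝ) : ℂ) * chi k0 τ0 g n η
      rw [hgV η hη', ih η hη']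
  -- the weight `m` and its primitive `W`
  set m : ℝ → ℝ → ℝ := fun τ s => min k0⁻¹ (τ - s) * |g s| with hmdef
  have hmcont : ∀ τ, Continuous (m τ) := fun τ =>
    (continuous_const.min (continuous_const.sub continuous_id)).mul hgcont.abs
  set W : ℝ → ℝ → ℝ := fun τ η => ∫ s in τ0..η, m τ s with hWdef
  have hWnonneg : ∀ τ η, τ0 ≤ η → η ≤ τ → 0 ≤ W τ η := by
    intro τ η h0 h1
    apply intervalIntegral.integral_nonneg h0
    intro s hs
    exact mul_nonneg (le_min (inv_pos.mpr hk0).le (by linarith [hs.2])) (abs_nonneg _)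
  have hWmono : ∀ τ η, τ0 ≤ η → η ≤ τ → W η η ≤ W τ η := by
    intro τ η h0 h1
    apply intervalIntegral.integral_mono_on h0 ((hmcont η).intervalIntegrable _ _)
      ((hmcont τ).intervalIntegrable _ _)
    intro s _
    exact mul_le_mul_of_nonneg_right (min_le_min le_rfl (by linarith)) (abs_nonneg _)
  -- the key uniform bound
  have key : ∀ n : ℕ, ∀ τ ∈ Set.Icc τ0 τ1,
      ‖chi k0 τ0 g n τ‖ ≤
        (Real.sqrt (2 * k0))⁻¹ * ((n.factorial : ℝ))⁻¹ * (W τ τ) ^ n := by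
    intro n
    induction n with
    | zero =>
      intro τ _
      have h1 : Complex.I * (k0 : ℂ) * (τ : ℂ) = ((k0 * τ : ℝ) : ℂ) * Complex.I := by
        push_cast; ring
      show ‖(Real.sqrt (2 * k0) : ℂ)⁻¹ * Complex.exp (Complex.I * k0 * τ)‖ ≤ _
      rw [h1, norm_mul, Complex.norm_exp_ofReal_mul_I,
        mul_one, norm_inv, Complex.norm_real, Real.norm_eq_abs,
        abs_of_nonneg (Real.sqrt_nonneg (2 * k0))]
      simp [Nat.factorial]
    | succ n ih =>
      intro τ hτm
      obtain ⟨h0, h1⟩ := hτm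
      set C : ℝ := (Real.sqrt (2 * k0))⁻¹ * ((n.factorial : ℝ))⁻¹ with hC
      have hCnn : 0 ≤ C :=
        mul_nonneg (inv_nonneg.mpr (Real.sqrt_nonneg _)) (inv_nonneg.mpr (Nat.cast_nonneg _))
      set b : ℝ → ℝ := fun η => m τ η * (C * (W τ η) ^ n) with hb
      have hWcont : Continuous (fun η => W τ η) :=
        intervalIntegral.continuous_primitive (fun a b => (hmcont τ).intervalIntegrable a b) τ0
      have hbcont : Continuous b := (hmcont τ).mul (continuous_const.mul (hWcont.pow n))
      have hnorm : ‖chi k0 τ0 g (n + 1) τ‖ ≤ |∫ η in τ0..τ, b η| := by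
        show ‖∫ η in τ0..τ, ((k0⁻¹ * Real.sin (k0 * (η - τ)) * g η : ℝ) : ℂ) * chi k0 τ0 g n η‖
          ≤ _
        apply intervalIntegral.norm_integral_le_abs_of_norm_le _ (hbcont.intervalIntegrable _ _)
        filter_upwards [ae_restrict_mem measurableSet_uIoc] with η hη
        rw [Set.uIoc_of_le h0] at hη
        have hη0 : τ0 ≤ η := hη.1.le
        have hητ : η ≤ τ := hη.2
        have hk' : (0:ℝ) ≤ k0⁻¹ := (inv_pos.mpr hk0).le
        have hs1 : |Real.sin (k0 * (η - τ))| ≤ 1 :=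
          abs_le.mpr ⟨Real.neg_one_le_sin _, Real.sin_le_one _⟩
        have hs2 : |Real.sin (k0 * (η - τ))| ≤ k0 * (τ - η) := by
          have h := Real.abs_sin_le_abs (x := k0 * (η - τ))
          rw [abs_mul, abs_of_pos hk0, abs_sub_comm,
            abs_of_nonneg (by linarith : (0:ℝ) ≤ τ - η)] at h
          exact h
        have hmin : |k0⁻¹ * Real.sin (k0 * (η - τ))| ≤ min k0⁻¹ (τ - η) := by
          rw [abs_mul, abs_of_nonneg hk']
          refine le_min ?_ ?_
          · nlinarith
          · have hkk : k0⁻¹ * (k0 * (τ - η)) = τ - η := by field_simp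
            nlinarith
        have hsin : |k0⁻¹ * Real.sin (k0 * (η - τ)) * g η| ≤ m τ η := by
          rw [abs_mul]
          exact mul_le_mul_of_nonneg_right hmin (abs_nonneg _)
        have hchi : ‖chi k0 τ0 g n η‖ ≤ C * (W τ η) ^ n := by
          refine (ih η ⟨hη0, hητ.trans h1⟩).trans ?_
          refine mul_le_mul_of_nonneg_left ?_ hCnn
          exact pow_le_pow_left₀ (hWnonneg η η hη0 le_rfl) (hWmono τ η hη0 hητ) n
        show ‖((k0⁻¹ * Real.sin (k0 * (η - τ)) * g η : ℝ) : ℂ) * chi k0 τ0 g n η‖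
          ≤ m τ η * (C * (W τ η) ^ n)
        rw [norm_mul, Complex.norm_real, Real.norm_eq_abs]
        exact mul_le_mul hsin hchi (norm_nonneg _)
          (mul_nonneg (le_min hk' (by linarith)) (abs_nonneg _))
      have hFTC : (∫ η in τ0..τ, b η) = C * (W τ τ) ^ (n + 1) / ((n : ℝ) + 1) := by
        have hderiv : ∀ η ∈ Set.uIcc τ0 τ,
            HasDerivAt (fun η => C * (W τ η) ^ (n + 1) / ((n : ℝ) + 1)) (b η) η := by
          intro η _
          have hWd : HasDerivAt (fun η => W τ η) (m τ η) η :=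
            ((hmcont τ).integral_hasStrictDerivAt τ0 η).hasDerivAt
          have h := ((hWd.pow (n + 1)).const_mul C).div_const ((n : ℝ) + 1)
          convert h using 1
          have hne : ((n : ℝ) + 1) ≠ 0 := by positivity
          show m τ η * (C * W τ η ^ n) = _
          rw [Nat.add_sub_cancel]
          push_cast
          field_simp
          all_goals rfl
        rw [intervalIntegral.integral_eq_sub_of_hasDerivAt hderiv
          (hbcont.intervalIntegrable _ _)]
        have hW0 : W τ τ0 = 0 := intervalIntegral.integral_same
        rw [hW0]
        simp
      have hpos : 0 ≤ C * (W τ τ) ^ (n + 1) / ((n : ℝ) + 1) :=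
        div_nonneg (mul_nonneg hCnn (pow_nonneg (hWnonneg τ τ h0 le_rfl) _)) (by positivity)
      have hval : |∫ η in τ0..τ, b η| = C * (W τ τ) ^ (n + 1) / ((n : ℝ) + 1) := by
        rw [hFTC, abs_of_nonneg hpos]
      refine hnorm.trans ?_
      rw [hval]
      have hfac : C * (W τ τ) ^ (n + 1) / ((n : ℝ) + 1)
          = (Real.sqrt (2 * k0))⁻¹ * (((n + 1).factorial : ℝ))⁻¹ * (W τ τ) ^ (n + 1) := by
        rw [hC, Nat.factorial_succ, div_eq_mul_inv]
        push_cast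
        rw [mul_inv]
        ring
      rw [hfac]
  -- conclusion
  intro n l hl τ hτm
  rw [congrchi n τ hτm]
  refine (key n τ hτm).trans ?_
  obtain ⟨h0, h1⟩ := hτm
  have hsub : Set.uIcc τ0 τ ⊆ Set.Icc τ0 τ1 := by
    rw [Set.uIcc_of_le h0]; exact Set.Icc_subset_Icc le_rfl h1
  have hWA : W τ τ ≤ k0⁻¹ * ∫ η in τ0..τ, |V η| := by
    rw [← intervalIntegral.integral_const_mul]
    apply intervalIntegral.integral_mono_on h0 ((hmcont τ).intervalIntegrable _ _)
      ((continuousOn_const.mul (hV.mono hsub).abs).intervalIntegrable)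
    intro s hs
    have hs' : s ∈ Set.Icc τ0 τ1 := ⟨hs.1, hs.2.trans h1⟩
    calc m τ s ≤ k0⁻¹ * |g s| := mul_le_mul_of_nonneg_right (min_le_left _ _) (abs_nonneg _)
      _ = k0⁻¹ * |V s| := by rw [hgV s hs']
  have hWB : W τ τ ≤ ∫ η in τ0..τ, (τ - η) * |V η| := by
    apply intervalIntegral.integral_mono_on h0 ((hmcont τ).intervalIntegrable _ _)
      (((continuousOn_const.sub continuousOn_id).mul (hV.mono hsub).abs).intervalIntegrable)
    intro s hs
    have hs' : s ∈ Set.Icc τ0 τ1 := ⟨hs.1, hs.2.trans h1⟩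
    calc m τ s ≤ (τ - s) * |g s| := mul_le_mul_of_nonneg_right (min_le_right _ _) (abs_nonneg _)
      _ = (τ - s) * |V s| := by rw [hgV s hs']
  have hW0 : 0 ≤ W τ τ := hWnonneg τ τ h0 le_rfl
  have hA : 0 ≤ k0⁻¹ * ∫ η in τ0..τ, |V η| := hW0.trans hWA
  have hcnn : 0 ≤ (Real.sqrt (2 * k0))⁻¹ * ((n.factorial : ℝ))⁻¹ :=
    mul_nonneg (inv_nonneg.mpr (Real.sqrt_nonneg _)) (inv_nonneg.mpr (Nat.cast_nonneg _))
  calc (Real.sqrt (2 * k0))⁻¹ * ((n.factorial : ℝ))⁻¹ * (W τ τ) ^ n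
      = (Real.sqrt (2 * k0))⁻¹ * ((n.factorial : ℝ))⁻¹ * ((W τ τ) ^ l * (W τ τ) ^ (n - l)) := by
        rw [← pow_add, Nat.add_sub_cancel' hl]
    _ ≤ (Real.sqrt (2 * k0))⁻¹ * ((n.factorial : ℝ))⁻¹ *
          ((k0⁻¹ * ∫ η in τ0..τ, |V η|) ^ l * (∫ η in τ0..τ, (τ - η) * |V η|) ^ (n - l)) := by
        refine mul_le_mul_of_nonneg_left ?_ hcnn
        exact mul_le_mul (pow_le_pow_left₀ hW0 hWA l) (pow_le_pow_left₀ hW0 hWB _)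
          (pow_nonneg hW0 _) (pow_nonneg hA l)
    _ = _ := by ring

end Modes
end
end

section
/- Assume in addition that V is continuously differentiable with V(τ₀) = 0. Then for every τ ∈ [τ₀, τ₁]: χ⁰(τ) · conj(χ¹(τ)) + χ¹(τ) · conj(χ⁰(τ)) = (2k₀²)^{-1} ∫_{τ₀}^τ sin(2k₀(η−τ)) V(η) dη = − V(τ)/(4k₀³) + (4k₀³)^{-1} ∫_{τ₀}^τ cos(2k₀(η−τ)) V'(η) dη. -/
open MeasureTheory Filter Set Topology

noncomputable section

namespace Modes

private lemma int_conj (f : ℝ → ℂ) (a b : ℝ) :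
    ∫ x in a..b, (starRingEnd ℂ) (f x) = (starRingEnd ℂ) (∫ x in a..b, f x) := by
  simp only [intervalIntegral, ← integral_conj, map_sub]

/-- **The first-order term of the mode expansion** (first order computation in
Pinamonti–Siemssen, Proposition 2.1): for `V` continuously differentiable with `V(τ₀) = 0`,
`χ⁰ conj(χ¹) + χ¹ conj(χ⁰) = (2k₀²)⁻¹ ∫ sin(2k₀(η−τ)) V(η) dη
  = −V(τ)/(4k₀³) + (4k₀³)⁻¹ ∫ cos(2k₀(η−τ)) V'(η) dη`. -/
theorem first_order_term (τ0 τ1 k0 : ℝ) (hτ : τ0 < τ1) (hk0 : 0 < k0)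
    (V V' : ℝ → ℝ)
    (hVder : ∀ τ ∈ Set.Icc τ0 τ1, HasDerivWithinAt V (V' τ) (Set.Icc τ0 τ1) τ)
    (hV'cont : ContinuousOn V' (Set.Icc τ0 τ1))
    (hV0 : V τ0 = 0) :
    ∀ τ ∈ Set.Icc τ0 τ1,
      chi k0 τ0 V 0 τ * (starRingEnd ℂ) (chi k0 τ0 V 1 τ)
          + chi k0 τ0 V 1 τ * (starRingEnd ℂ) (chi k0 τ0 V 0 τ)
        = (((2 * k0 ^ 2)⁻¹ * ∫ η in τ0..τ, Real.sin (2 * k0 * (η - τ)) * V η : ℝ) : ℂ) ∧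
      chi k0 τ0 V 0 τ * (starRingEnd ℂ) (chi k0 τ0 V 1 τ)
          + chi k0 τ0 V 1 τ * (starRingEnd ℂ) (chi k0 τ0 V 0 τ)
        = ((-(V τ) / (4 * k0 ^ 3)
            + (4 * k0 ^ 3)⁻¹ * ∫ η in τ0..τ, Real.cos (2 * k0 * (η - τ)) * V' η : ℝ) : ℂ) := by
  intro τ hτmem
  obtain ⟨hτ0, hτ1⟩ := hτmem
  have hk0' : (k0 : ℝ) ≠ 0 := hk0.ne'
  have hVcont : ContinuousOn V (Set.Icc τ0 τ1) := fun x hx => (hVder x hx).continuousWithinAt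
  have huIcc : Set.uIcc τ0 τ = Set.Icc τ0 τ := Set.uIcc_of_le hτ0
  have hsub : Set.uIcc τ0 τ ⊆ Set.Icc τ0 τ1 := by
    rw [huIcc]; exact Set.Icc_subset_Icc le_rfl hτ1
  set f : ℝ → ℂ := fun η => ((k0⁻¹ * Real.sin (k0 * (η - τ)) * V η : ℝ) : ℂ) * chi k0 τ0 V 0 η
    with hf
  have hchi1 : chi k0 τ0 V 1 τ = ∫ η in τ0..τ, f η := rfl
  -- continuity of the integrand
  have hchi0cont : Continuous (chi k0 τ0 V 0) := by
    show Continuous fun η : ℝ => (Real.sqrt (2 * k0) : ℂ)⁻¹ * Complex.exp (Complex.I * k0 * η)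
    fun_prop
  have hcf : ContinuousOn f (Set.uIcc τ0 τ) := by
    apply ContinuousOn.mul _ hchi0cont.continuousOn
    apply Continuous.comp_continuousOn Complex.continuous_ofReal
    exact ((by fun_prop : Continuous fun η : ℝ => k0⁻¹ * Real.sin (k0 * (η - τ))).continuousOn).mul
      (hVcont.mono hsub)
  set h : ℝ → ℂ := fun η => chi k0 τ0 V 0 τ * (starRingEnd ℂ) (f η) with hh
  have hh_cont : ContinuousOn h (Set.uIcc τ0 τ) :=
    continuousOn_const.mul (Complex.continuous_conj.comp_continuousOn hcf)
  have hint_h : IntervalIntegrable h volume τ0 τ := hh_cont.intervalIntegrable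
  have hint_hc : IntervalIntegrable (fun η => (starRingEnd ℂ) (h η)) volume τ0 τ :=
    (Complex.continuous_conj.comp_continuousOn hh_cont).intervalIntegrable
  -- pointwise computation
  have hptwise : ∀ η : ℝ, h η + (starRingEnd ℂ) (h η)
      = (((2 * k0 ^ 2)⁻¹ * (Real.sin (2 * k0 * (η - τ)) * V η) : ℝ) : ℂ) := by
    intro η
    have hw : chi k0 τ0 V 0 τ * (starRingEnd ℂ) (chi k0 τ0 V 0 η)
        = (((2 * k0)⁻¹ : ℝ) : ℂ) * Complex.exp ((k0 * (τ - η) : ℝ) * Complex.I) := by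
      show (Real.sqrt (2 * k0) : ℂ)⁻¹ * Complex.exp (Complex.I * k0 * τ) *
        (starRingEnd ℂ) ((Real.sqrt (2 * k0) : ℂ)⁻¹ * Complex.exp (Complex.I * k0 * η)) = _
      rw [map_mul, map_inv₀, Complex.conj_ofReal]
      have he : Complex.exp (Complex.I * k0 * τ) * (starRingEnd ℂ) (Complex.exp (Complex.I * k0 * η))
          = Complex.exp ((k0 * (τ - η) : ℝ) * Complex.I) := by
        rw [← Complex.exp_conj, ← Complex.exp_add]
        congr 1
        simp only [map_mul, Complex.conj_I, Complex.conj_ofReal]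
        push_cast; ring
      have hs : ((Real.sqrt (2 * k0) : ℂ))⁻¹ * ((Real.sqrt (2 * k0) : ℂ))⁻¹
          = (((2 * k0)⁻¹ : ℝ) : ℂ) := by
        rw [← mul_inv]; norm_cast; rw [Real.mul_self_sqrt (by positivity)]
      calc (Real.sqrt (2 * k0) : ℂ)⁻¹ * Complex.exp (Complex.I * k0 * τ) *
            ((Real.sqrt (2 * k0) : ℂ)⁻¹ * (starRingEnd ℂ) (Complex.exp (Complex.I * k0 * η)))
          = ((Real.sqrt (2 * k0) : ℂ)⁻¹ * (Real.sqrt (2 * k0) : ℂ)⁻¹) *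
            (Complex.exp (Complex.I * k0 * τ) * (starRingEnd ℂ) (Complex.exp (Complex.I * k0 * η))) := by
            ring
        _ = _ := by rw [hs, he]
    have h1 : h η = ((k0⁻¹ * Real.sin (k0 * (η - τ)) * V η : ℝ) : ℂ) *
        (chi k0 τ0 V 0 τ * (starRingEnd ℂ) (chi k0 τ0 V 0 η)) := by
      simp only [hh, hf, map_mul, Complex.conj_ofReal]; ring
    have h2 : h η + (starRingEnd ℂ) (h η)
        = ((k0⁻¹ * Real.sin (k0 * (η - τ)) * V η : ℝ) : ℂ) *
          ((2 * ((2 * k0)⁻¹ * Real.cos (k0 * (τ - η))) : ℝ) : ℂ) := by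
      rw [h1, map_mul, Complex.conj_ofReal, ← mul_add, Complex.add_conj]
      congr 2
      rw [hw]
      simp only [Complex.mul_re, Complex.ofReal_re, Complex.ofReal_im,
        Complex.exp_ofReal_mul_I_re, zero_mul, sub_zero]
    rw [h2]
    norm_cast
    have hsin : Real.sin (2 * k0 * (η - τ)) =
        2 * (Real.sin (k0 * (η - τ)) * Real.cos (k0 * (η - τ))) := by
      rw [show 2 * k0 * (η - τ) = 2 * (k0 * (η - τ)) by ring, Real.sin_two_mul]; ring
    have hcos : Real.cos (k0 * (τ - η)) = Real.cos (k0 * (η - τ)) := by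
      rw [show k0 * (τ - η) = -(k0 * (η - τ)) by ring, Real.cos_neg]
    rw [hcos, hsin]
    field_simp
  -- first identity
  have part1 : chi k0 τ0 V 0 τ * (starRingEnd ℂ) (chi k0 τ0 V 1 τ)
      + chi k0 τ0 V 1 τ * (starRingEnd ℂ) (chi k0 τ0 V 0 τ)
      = (((2 * k0 ^ 2)⁻¹ * ∫ η in τ0..τ, Real.sin (2 * k0 * (η - τ)) * V η : ℝ) : ℂ) := by
    have hz : chi k0 τ0 V 0 τ * (starRingEnd ℂ) (chi k0 τ0 V 1 τ) = ∫ η in τ0..τ, h η := by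
      rw [hchi1, ← int_conj, ← intervalIntegral.integral_const_mul]
    have hz2 : chi k0 τ0 V 1 τ * (starRingEnd ℂ) (chi k0 τ0 V 0 τ)
        = (starRingEnd ℂ) (∫ η in τ0..τ, h η) := by
      rw [← hz, map_mul, Complex.conj_conj]
      ring
    rw [hz, hz2, ← int_conj, ← intervalIntegral.integral_add hint_h hint_hc]
    rw [intervalIntegral.integral_congr (g := fun η =>
      (((2 * k0 ^ 2)⁻¹ * (Real.sin (2 * k0 * (η - τ)) * V η) : ℝ) : ℂ)) (fun η _ => hptwise η)]
    rw [intervalIntegral.integral_ofReal, intervalIntegral.integral_const_mul]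
  refine ⟨part1, ?_⟩
  -- integration by parts
  have hVc' : ContinuousOn V (Set.uIcc τ0 τ) := hVcont.mono hsub
  have hV'c' : ContinuousOn V' (Set.uIcc τ0 τ) := hV'cont.mono hsub
  have hint_sinV : IntervalIntegrable (fun η => Real.sin (2 * k0 * (η - τ)) * V η) volume τ0 τ :=
    (((by fun_prop : Continuous fun η : ℝ => Real.sin (2 * k0 * (η - τ))).continuousOn).mul
      hVc').intervalIntegrable
  have hint_cosV' : IntervalIntegrable (fun η => Real.cos (2 * k0 * (η - τ)) * V' η) volume τ0 τ :=
    (((by fun_prop : Continuous fun η : ℝ => Real.cos (2 * k0 * (η - τ))).continuousOn).mul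
      hV'c').intervalIntegrable
  set F : ℝ → ℝ := fun η => -(V η * Real.cos (2 * k0 * (η - τ))) / (2 * k0) with hF
  have hFTC : ∫ η in τ0..τ, (Real.sin (2 * k0 * (η - τ)) * V η
      - (2 * k0)⁻¹ * (Real.cos (2 * k0 * (η - τ)) * V' η)) = F τ - F τ0 := by
    apply intervalIntegral.integral_eq_sub_of_hasDeriv_right_of_le hτ0
    · apply ContinuousOn.div_const
      apply ContinuousOn.neg
      exact ((hVcont.mono (Set.Icc_subset_Icc le_rfl hτ1)).mul
        ((by fun_prop : Continuous fun η : ℝ => Real.cos (2 * k0 * (η - τ))).continuousOn))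
    · intro x hx
      have hx' : x ∈ Set.Icc τ0 τ1 := ⟨hx.1.le, hx.2.le.trans hτ1⟩
      have hmem : Set.Icc τ0 τ1 ∈ 𝓝 x := Icc_mem_nhds hx.1 (lt_of_lt_of_le hx.2 hτ1)
      have hV : HasDerivAt V (V' x) x := (hVder x hx').hasDerivAt hmem
      have hcos : HasDerivAt (fun η => Real.cos (2 * k0 * (η - τ)))
          (-Real.sin (2 * k0 * (x - τ)) * (2 * k0)) x := by
        have hinner : HasDerivAt (fun η : ℝ => 2 * k0 * (η - τ)) (2 * k0) x := by
          simpa using ((hasDerivAt_id x).sub_const τ).const_mul (2 * k0)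
        exact (Real.hasDerivAt_cos (2 * k0 * (x - τ))).comp x hinner
      have hFd : HasDerivAt F
          ((-(V' x * Real.cos (2 * k0 * (x - τ)) + V x * (-Real.sin (2 * k0 * (x - τ)) * (2 * k0)))) / (2 * k0)) x :=
        ((hV.mul hcos).neg).div_const (2 * k0)
      have : Real.sin (2 * k0 * (x - τ)) * V x - (2 * k0)⁻¹ * (Real.cos (2 * k0 * (x - τ)) * V' x)
          = (-(V' x * Real.cos (2 * k0 * (x - τ)) + V x * (-Real.sin (2 * k0 * (x - τ)) * (2 * k0)))) / (2 * k0) := by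
        field_simp
        ring
      rw [this]
      exact hFd.hasDerivWithinAt
    · exact hint_sinV.sub (hint_cosV'.const_mul _)
  have hFτ : F τ = -(V τ) / (2 * k0) := by
    simp [hF]
  have hFτ0 : F τ0 = 0 := by simp [hF, hV0]
  have key2 : ∫ η in τ0..τ, Real.sin (2 * k0 * (η - τ)) * V η
      = -(V τ) / (2 * k0) + (2 * k0)⁻¹ * ∫ η in τ0..τ, Real.cos (2 * k0 * (η - τ)) * V' η := by
    have := hFTC
    rw [intervalIntegral.integral_sub hint_sinV (hint_cosV'.const_mul _),
      intervalIntegral.integral_const_mul, hFτ, hFτ0, sub_zero] at this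
    linarith
  rw [part1]
  norm_cast
  rw [key2]
  field_simp
  ring

end Modes
end
end

section
/- Assume in addition that V is continuously differentiable with V(τ₀) = 0. Then for every τ ∈ [τ₀, τ₁]: χ⁰(τ)·conj(χ²(τ)) + χ¹(τ)·conj(χ¹(τ)) + χ²(τ)·conj(χ⁰(τ)) = k₀^{-3} ∫_{τ₀}^τ sin(k₀(η−τ)) V(η) ( ∫_{τ₀}^η sin(k₀(2ξ−η−τ)) V(ξ) dξ ) dη = (2k₀⁴)^{-1} ∫_{τ₀}^τ sin(k₀(η−τ)) V(η) ( ∫_{τ₀}^η cos(k₀(2ξ−η−τ)) V'(ξ) dξ − cos(k₀(η−τ)) V(η) ) dη. -/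
open MeasureTheory Filter Set Topology

noncomputable section

namespace Modes

def E (k0 x : ℝ) : ℂ := Complex.exp (Complex.I * k0 * x)

lemma E_ne (k0 x : ℝ) : E k0 x ≠ 0 := Complex.exp_ne_zero _

lemma E_cont (k0 : ℝ) : Continuous (E k0) := by
  unfold E
  exact Complex.continuous_exp.comp (by continuity)

lemma E_conj (k0 x : ℝ) : (starRingEnd ℂ) (E k0 x) = (E k0 x)⁻¹ := by
  unfold E
  rw [← Complex.exp_conj, ← Complex.exp_neg]
  congr 1
  simp [Complex.ext_iff]

lemma sinC (θ : ℝ) : ((Real.sin θ : ℝ) : ℂ)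
    = (2 * Complex.I)⁻¹ * (Complex.exp (Complex.I * θ) - Complex.exp (-(Complex.I * θ))) := by
  rw [Complex.ofReal_sin]
  rw [mul_comm Complex.I (θ:ℂ), Complex.exp_mul_I]
  rw [show -((θ:ℂ) * Complex.I) = (-θ) * Complex.I by ring, Complex.exp_mul_I]
  rw [Complex.sin_neg, Complex.cos_neg]
  have hI := Complex.I_ne_zero
  field_simp
  ring_nf

def D2 (k0 : ℝ) : ℝ → ℂ := fun x => E k0 x ^ 2
def D2i (k0 : ℝ) : ℝ → ℂ := fun x => (E k0 x ^ 2)⁻¹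
def one : ℝ → ℂ := fun _ => 1

lemma D2_cont (k0 : ℝ) : Continuous (D2 k0) := (E_cont k0).pow 2
lemma D2i_cont (k0 : ℝ) : Continuous (D2i k0) :=
  ((E_cont k0).pow 2).inv₀ (fun x => pow_ne_zero 2 (E_ne k0 x))
lemma one_cont : Continuous one := continuous_const

lemma D2_conj (k0 x : ℝ) : (starRingEnd ℂ) (D2 k0 x) = D2i k0 x := by
  simp [D2, D2i, E_conj, inv_pow]
lemma D2i_conj (k0 x : ℝ) : (starRingEnd ℂ) (D2i k0 x) = D2 k0 x := by
  simp [D2, D2i, E_conj, inv_pow]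

lemma conj_int (f : ℝ → ℂ) (a b : ℝ) :
    (starRingEnd ℂ) (∫ x in a..b, f x) = ∫ x in a..b, (starRingEnd ℂ) (f x) := by
  simp [intervalIntegral, ← integral_conj]

lemma prim_mul {p q : ℝ → ℂ} (hp : Continuous p) (hq : Continuous q) (a b : ℝ) :
    (∫ x in a..b, p x) * (∫ x in a..b, q x)
      = ∫ x in a..b, (p x * ∫ y in a..x, q y) + (∫ y in a..x, p y) * q x := by
  set P : ℝ → ℂ := fun t => ∫ x in a..t, p x with hP
  set Q : ℝ → ℂ := fun t => ∫ x in a..t, q x with hQ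
  have hPc : Continuous P := intervalIntegral.continuous_primitive
    (fun a b => hp.intervalIntegrable a b) a
  have hQc : Continuous Q := intervalIntegral.continuous_primitive
    (fun a b => hq.intervalIntegrable a b) a
  have hRint : Continuous fun x => p x * Q x + P x * q x :=
    (hp.mul hQc).add (hPc.mul hq)
  set R : ℝ → ℂ := fun t => ∫ x in a..t, (p x * Q x + P x * q x) with hR
  have key : ∀ t, P t * Q t - R t = 0 := by
    have hder : ∀ t, HasDerivAt (fun t => P t * Q t - R t) 0 t := by
      intro t
      have h1 : HasDerivAt P (p t) t := (hp.integral_hasStrictDerivAt a t).hasDerivAt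
      have h2 : HasDerivAt Q (q t) t := (hq.integral_hasStrictDerivAt a t).hasDerivAt
      have h3 : HasDerivAt R (p t * Q t + P t * q t) t :=
        (hRint.integral_hasStrictDerivAt a t).hasDerivAt
      have := (h1.mul h2).sub h3
      exact this.congr_deriv (by ring)
    intro t
    have hconst := is_const_of_deriv_eq_zero (fun x => (hder x).differentiableAt)
      (fun x => (hder x).deriv) t a
    have ha : P a * Q a - R a = 0 := by
      simp [hP, hQ, hR, intervalIntegral.integral_same]
    rw [hconst, ha]
  exact sub_eq_zero.mp (key b)

/-- iterated-primitive gadget -/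
def J (τ0 : ℝ) (W : ℝ → ℝ) (f : ℝ → ℂ) (t : ℝ) : ℂ := ∫ η in τ0..t, (W η : ℂ) * f η

variable {k0 τ0 : ℝ} {W : ℝ → ℝ} {f g : ℝ → ℂ}

lemma W_contC (hW : Continuous W) : Continuous (fun x => ((W x : ℝ) : ℂ)) :=
  Complex.continuous_ofReal.comp hW

lemma J_cont (hW : Continuous W) (hf : Continuous f) : Continuous (J τ0 W f) :=
  intervalIntegral.continuous_primitive
    (fun a b => ((W_contC hW).mul hf).intervalIntegrable a b) τ0

lemma J_congr (h : ∀ x, f x = g x) (t : ℝ) : J τ0 W f t = J τ0 W g t := by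
  unfold J
  exact intervalIntegral.integral_congr (fun x _ => by rw [h x])

lemma J_conj (t : ℝ) :
    (starRingEnd ℂ) (J τ0 W f t) = J τ0 W (fun x => (starRingEnd ℂ) (f x)) t := by
  unfold J
  rw [conj_int]
  exact intervalIntegral.integral_congr (fun x _ => by simp)

lemma J_mul (hW : Continuous W) (hf : Continuous f) (hg : Continuous g) (t : ℝ) :
    J τ0 W f t * J τ0 W g t
      = J τ0 W (fun x => f x * J τ0 W g x + J τ0 W f x * g x) t := by
  unfold J
  rw [prim_mul (p := fun x => ((W x : ℝ) : ℂ) * f x) (q := fun x => ((W x : ℝ) : ℂ) * g x)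
    ((W_contC hW).mul hf) ((W_contC hW).mul hg)]
  exact intervalIntegral.integral_congr (fun x _ => by simp only; ring)

lemma J_lin4 {g1 g2 g3 g4 : ℝ → ℂ} (hW : Continuous W) (h1 : Continuous g1)
    (h2 : Continuous g2) (h3 : Continuous g3) (h4 : Continuous g4)
    (C1 C2 C3 C4 : ℂ) (t : ℝ) :
    J τ0 W (fun x => C1 * g1 x + C2 * g2 x + C3 * g3 x + C4 * g4 x) t
      = C1 * J τ0 W g1 t + C2 * J τ0 W g2 t + C3 * J τ0 W g3 t + C4 * J τ0 W g4 t := by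
  unfold J
  have e : ∀ x : ℝ, ((W x : ℝ) : ℂ) * (C1 * g1 x + C2 * g2 x + C3 * g3 x + C4 * g4 x)
      = C1 * ((W x : ℂ) * g1 x) + (C2 * ((W x : ℂ) * g2 x)
        + (C3 * ((W x : ℂ) * g3 x) + C4 * ((W x : ℂ) * g4 x))) := fun x => by ring
  rw [intervalIntegral.integral_congr (fun x _ => e x)]
  have i1 : IntervalIntegrable (fun x => C1 * (((W x : ℝ):ℂ) * g1 x)) volume τ0 t := (continuous_const.mul ((W_contC hW).mul h1) : Continuous fun x => C1 * (((W x : ℝ):ℂ) * g1 x)).intervalIntegrable (μ := volume) τ0 t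
  have i2 : IntervalIntegrable (fun x => C2 * (((W x : ℝ):ℂ) * g2 x)) volume τ0 t := (continuous_const.mul ((W_contC hW).mul h2) : Continuous fun x => C2 * (((W x : ℝ):ℂ) * g2 x)).intervalIntegrable (μ := volume) τ0 t
  have i3 : IntervalIntegrable (fun x => C3 * (((W x : ℝ):ℂ) * g3 x)) volume τ0 t := (continuous_const.mul ((W_contC hW).mul h3) : Continuous fun x => C3 * (((W x : ℝ):ℂ) * g3 x)).intervalIntegrable (μ := volume) τ0 t
  have i4 : IntervalIntegrable (fun x => C4 * (((W x : ℝ):ℂ) * g4 x)) volume τ0 t := (continuous_const.mul ((W_contC hW).mul h4) : Continuous fun x => C4 * (((W x : ℝ):ℂ) * g4 x)).intervalIntegrable (μ := volume) τ0 t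
  rw [intervalIntegral.integral_add i1 (i2.add (i3.add i4)),
      intervalIntegral.integral_add i2 (i3.add i4),
      intervalIntegral.integral_add i3 i4,
      intervalIntegral.integral_const_mul, intervalIntegral.integral_const_mul,
      intervalIntegral.integral_const_mul, intervalIntegral.integral_const_mul]
  ring

lemma exp_shift (k0 η t : ℝ) :
    Complex.exp (Complex.I * ((k0 * (η - t) : ℝ) : ℂ)) = E k0 η * (E k0 t)⁻¹ := by
  rw [show Complex.I * ((k0 * (η - t) : ℝ) : ℂ)
      = Complex.I * k0 * η - Complex.I * k0 * t by push_cast; ring,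
    Complex.exp_sub, div_eq_mul_inv]
  rfl

lemma exp_shift' (k0 η t : ℝ) :
    Complex.exp (-(Complex.I * ((k0 * (η - t) : ℝ) : ℂ))) = E k0 t * (E k0 η)⁻¹ := by
  rw [show -(Complex.I * ((k0 * (η - t) : ℝ) : ℂ))
      = Complex.I * k0 * t - Complex.I * k0 * η by push_cast; ring,
    Complex.exp_sub, div_eq_mul_inv]
  rfl

lemma E_cancel (k0 x : ℝ) : E k0 x * (E k0 x)⁻¹ = 1 := mul_inv_cancel₀ (E_ne k0 x)

lemma sin_mul_E (k0 η t : ℝ) : ((Real.sin (k0 * (η - t)) : ℝ) : ℂ) * E k0 η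
    = (2 * Complex.I)⁻¹ * (E k0 η ^ 2 * (E k0 t)⁻¹ - E k0 t) := by
  rw [sinC, exp_shift, exp_shift']
  linear_combination (-((2 * Complex.I)⁻¹ * E k0 t)) * E_cancel k0 η

lemma sin_mul_Einv (k0 η t : ℝ) : ((Real.sin (k0 * (η - t)) : ℝ) : ℂ) * (E k0 η)⁻¹
    = (2 * Complex.I)⁻¹ * ((E k0 t)⁻¹ - E k0 t * ((E k0 η)⁻¹) ^ 2) := by
  rw [sinC, exp_shift, exp_shift']
  linear_combination ((2 * Complex.I)⁻¹ * (E k0 t)⁻¹) * E_cancel k0 η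

lemma sin_mul_ff (k0 η t : ℝ) : ((Real.sin (k0 * (η - t)) : ℝ) : ℂ) * ((E k0 η)⁻¹ * (E k0 t)⁻¹)
    = (2 * Complex.I)⁻¹ * (((E k0 t)⁻¹) ^ 2 - ((E k0 η)⁻¹) ^ 2) := by
  rw [sinC, exp_shift, exp_shift']
  linear_combination ((2 * Complex.I)⁻¹ * ((E k0 t)⁻¹) ^ 2) * E_cancel k0 η
    - ((2 * Complex.I)⁻¹ * ((E k0 η)⁻¹) ^ 2) * E_cancel k0 t

lemma sin_mul_ee (k0 η t : ℝ) : ((Real.sin (k0 * (η - t)) : ℝ) : ℂ) * (E k0 η * E k0 t)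
    = (2 * Complex.I)⁻¹ * (E k0 η ^ 2 - E k0 t ^ 2) := by
  rw [sinC, exp_shift, exp_shift']
  linear_combination ((2 * Complex.I)⁻¹ * E k0 η ^ 2) * E_cancel k0 t
    - ((2 * Complex.I)⁻¹ * E k0 t ^ 2) * E_cancel k0 η

lemma I2_sq : (2 * Complex.I)⁻¹ * (2 * Complex.I)⁻¹ = -(4 : ℂ)⁻¹ := by
  rw [← mul_inv, show (2 * Complex.I) * (2 * Complex.I) = (4:ℂ) * (Complex.I * Complex.I) by ring,
    Complex.I_mul_I]
  norm_num

variable {k0 τ0 : ℝ} {W : ℝ → ℝ}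

lemma chi1_eq (hW : Continuous W) (t : ℝ) :
    chi k0 τ0 W 1 t = (Real.sqrt (2 * k0) : ℂ)⁻¹ * (k0 : ℂ)⁻¹ * (2 * Complex.I)⁻¹ *
      ((E k0 t)⁻¹ * J τ0 W (D2 k0) t - E k0 t * J τ0 W one t) := by
  have key : ∀ η : ℝ, ((k0⁻¹ * Real.sin (k0 * (η - t)) * W η : ℝ) : ℂ) *
        ((Real.sqrt (2 * k0) : ℂ)⁻¹ * Complex.exp (Complex.I * k0 * η))
      = ((W η : ℝ) : ℂ) *
          ((Real.sqrt (2 * k0) : ℂ)⁻¹ * (k0 : ℂ)⁻¹ * (2 * Complex.I)⁻¹ * (E k0 t)⁻¹ * D2 k0 η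
          - (Real.sqrt (2 * k0) : ℂ)⁻¹ * (k0 : ℂ)⁻¹ * (2 * Complex.I)⁻¹ * E k0 t * one η) := by
    intro η
    rw [Complex.ofReal_mul, Complex.ofReal_mul, Complex.ofReal_inv]
    simp only [D2, one]
    rw [show Complex.exp (Complex.I * (k0:ℝ) * (η:ℝ)) = E k0 η from rfl]
    linear_combination ((k0 : ℂ)⁻¹ * ((W η : ℝ) : ℂ) * (Real.sqrt (2 * k0) : ℂ)⁻¹)
      * sin_mul_E k0 η t
  show (∫ η in τ0..t, ((k0⁻¹ * Real.sin (k0 * (η - t)) * W η : ℝ) : ℂ) *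
      ((Real.sqrt (2 * k0) : ℂ)⁻¹ * Complex.exp (Complex.I * k0 * η))) = _
  rw [intervalIntegral.integral_congr (fun η _ => key η)]
  have h := J_lin4 (τ0 := τ0) hW (D2_cont k0) one_cont (D2_cont k0) one_cont
    ((Real.sqrt (2 * k0) : ℂ)⁻¹ * (k0 : ℂ)⁻¹ * (2 * Complex.I)⁻¹ * (E k0 t)⁻¹)
    (-((Real.sqrt (2 * k0) : ℂ)⁻¹ * (k0 : ℂ)⁻¹ * (2 * Complex.I)⁻¹ * E k0 t)) 0 0 t
  unfold J at h ⊢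
  rw [show (fun η => ((W η : ℝ) : ℂ) *
        ((Real.sqrt (2 * k0) : ℂ)⁻¹ * (k0 : ℂ)⁻¹ * (2 * Complex.I)⁻¹ * (E k0 t)⁻¹ * D2 k0 η
          - (Real.sqrt (2 * k0) : ℂ)⁻¹ * (k0 : ℂ)⁻¹ * (2 * Complex.I)⁻¹ * E k0 t * one η))
      = fun η => ((W η : ℝ) : ℂ) *
        (((Real.sqrt (2 * k0) : ℂ)⁻¹ * (k0 : ℂ)⁻¹ * (2 * Complex.I)⁻¹ * (E k0 t)⁻¹) * D2 k0 η
          + (-((Real.sqrt (2 * k0) : ℂ)⁻¹ * (k0 : ℂ)⁻¹ * (2 * Complex.I)⁻¹ * E k0 t)) * one η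
          + 0 * D2 k0 η + 0 * one η)
    from funext fun η => by ring]
  rw [h]
  ring

lemma chi2_eq (hW : Continuous W) (τ : ℝ) :
    chi k0 τ0 W 2 τ =
      (Real.sqrt (2 * k0) : ℂ)⁻¹ * (k0 : ℂ)⁻¹ ^ 2 * (-(4:ℂ)⁻¹) * (E k0 τ)⁻¹ *
        J τ0 W (fun η => J τ0 W (D2 k0) η) τ
      + (Real.sqrt (2 * k0) : ℂ)⁻¹ * (k0 : ℂ)⁻¹ ^ 2 * (4:ℂ)⁻¹ * (E k0 τ)⁻¹ *
        J τ0 W (fun η => D2 k0 η * J τ0 W one η) τ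
      + (Real.sqrt (2 * k0) : ℂ)⁻¹ * (k0 : ℂ)⁻¹ ^ 2 * (4:ℂ)⁻¹ * E k0 τ *
        J τ0 W (fun η => D2i k0 η * J τ0 W (D2 k0) η) τ
      + (Real.sqrt (2 * k0) : ℂ)⁻¹ * (k0 : ℂ)⁻¹ ^ 2 * (-(4:ℂ)⁻¹) * E k0 τ *
        J τ0 W (fun η => J τ0 W one η) τ := by
  have key : ∀ η : ℝ, ((k0⁻¹ * Real.sin (k0 * (η - τ)) * W η : ℝ) : ℂ) * chi k0 τ0 W 1 η
      = ((W η : ℝ) : ℂ) *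
          ((Real.sqrt (2 * k0) : ℂ)⁻¹ * (k0 : ℂ)⁻¹ ^ 2 * (-(4:ℂ)⁻¹) * (E k0 τ)⁻¹ *
              J τ0 W (D2 k0) η
          + (Real.sqrt (2 * k0) : ℂ)⁻¹ * (k0 : ℂ)⁻¹ ^ 2 * (4:ℂ)⁻¹ * (E k0 τ)⁻¹ *
              (D2 k0 η * J τ0 W one η)
          + (Real.sqrt (2 * k0) : ℂ)⁻¹ * (k0 : ℂ)⁻¹ ^ 2 * (4:ℂ)⁻¹ * E k0 τ *
              (D2i k0 η * J τ0 W (D2 k0) η)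
          + (Real.sqrt (2 * k0) : ℂ)⁻¹ * (k0 : ℂ)⁻¹ ^ 2 * (-(4:ℂ)⁻¹) * E k0 τ *
              J τ0 W one η) := by
    intro η
    rw [chi1_eq hW η, Complex.ofReal_mul, Complex.ofReal_mul, Complex.ofReal_inv]
    simp only [D2, D2i, one]
    linear_combination
      ((Real.sqrt (2 * k0) : ℂ)⁻¹ * (k0 : ℂ)⁻¹ ^ 2 * (2 * Complex.I)⁻¹ * ((W η : ℝ) : ℂ) *
          J τ0 W (D2 k0) η) * sin_mul_Einv k0 η τ
      - ((Real.sqrt (2 * k0) : ℂ)⁻¹ * (k0 : ℂ)⁻¹ ^ 2 * (2 * Complex.I)⁻¹ * ((W η : ℝ) : ℂ) *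
          J τ0 W one η) * sin_mul_E k0 η τ
      + ((Real.sqrt (2 * k0) : ℂ)⁻¹ * (k0 : ℂ)⁻¹ ^ 2 * ((W η : ℝ) : ℂ) *
          (((E k0 τ)⁻¹ - E k0 τ * ((E k0 η)⁻¹) ^ 2) * J τ0 W (D2 k0) η
            - (E k0 η ^ 2 * (E k0 τ)⁻¹ - E k0 τ) * J τ0 W one η)) * I2_sq
  show (∫ η in τ0..τ, ((k0⁻¹ * Real.sin (k0 * (η - τ)) * W η : ℝ) : ℂ) * chi k0 τ0 W 1 η) = _
  rw [intervalIntegral.integral_congr (fun η _ => key η)]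
  have h := J_lin4 (τ0 := τ0) hW (J_cont (τ0 := τ0) hW (D2_cont k0))
    ((D2_cont k0).mul (J_cont (τ0 := τ0) hW one_cont))
    ((D2i_cont k0).mul (J_cont (τ0 := τ0) hW (D2_cont k0)))
    (J_cont (τ0 := τ0) hW one_cont)
    ((Real.sqrt (2 * k0) : ℂ)⁻¹ * (k0 : ℂ)⁻¹ ^ 2 * (-(4:ℂ)⁻¹) * (E k0 τ)⁻¹)
    ((Real.sqrt (2 * k0) : ℂ)⁻¹ * (k0 : ℂ)⁻¹ ^ 2 * (4:ℂ)⁻¹ * (E k0 τ)⁻¹)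
    ((Real.sqrt (2 * k0) : ℂ)⁻¹ * (k0 : ℂ)⁻¹ ^ 2 * (4:ℂ)⁻¹ * E k0 τ)
    ((Real.sqrt (2 * k0) : ℂ)⁻¹ * (k0 : ℂ)⁻¹ ^ 2 * (-(4:ℂ)⁻¹) * E k0 τ) τ
  unfold J at h ⊢
  exact h

lemma exp_shift2 (k0 ξ η t : ℝ) :
    Complex.exp (Complex.I * ((k0 * (2 * ξ - η - t) : ℝ) : ℂ))
      = E k0 ξ ^ 2 * ((E k0 η)⁻¹ * (E k0 t)⁻¹) := by
  rw [show Complex.I * ((k0 * (2 * ξ - η - t) : ℝ) : ℂ)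
      = (Complex.I * k0 * ξ + Complex.I * k0 * ξ) - (Complex.I * k0 * η + Complex.I * k0 * t)
      by push_cast; ring,
    Complex.exp_sub, Complex.exp_add, Complex.exp_add, div_eq_mul_inv, mul_inv]
  rw [show Complex.exp (Complex.I * k0 * ξ) = E k0 ξ from rfl,
    show Complex.exp (Complex.I * k0 * η) = E k0 η from rfl,
    show Complex.exp (Complex.I * k0 * t) = E k0 t from rfl]
  ring

lemma exp_shift2' (k0 ξ η t : ℝ) :
    Complex.exp (-(Complex.I * ((k0 * (2 * ξ - η - t) : ℝ) : ℂ)))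
      = ((E k0 ξ)⁻¹) ^ 2 * (E k0 η * E k0 t) := by
  rw [show -(Complex.I * ((k0 * (2 * ξ - η - t) : ℝ) : ℂ))
      = (Complex.I * k0 * η + Complex.I * k0 * t) - (Complex.I * k0 * ξ + Complex.I * k0 * ξ)
      by push_cast; ring,
    Complex.exp_sub, Complex.exp_add, Complex.exp_add, div_eq_mul_inv, mul_inv]
  rw [show Complex.exp (Complex.I * k0 * ξ) = E k0 ξ from rfl,
    show Complex.exp (Complex.I * k0 * η) = E k0 η from rfl,
    show Complex.exp (Complex.I * k0 * t) = E k0 t from rfl]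
  ring

lemma inner_eq (hW : Continuous W) (τ η : ℝ) :
    ((∫ ξ in τ0..η, Real.sin (k0 * (2 * ξ - η - τ)) * W ξ : ℝ) : ℂ)
      = (2 * Complex.I)⁻¹ * (((E k0 η)⁻¹ * (E k0 τ)⁻¹) * J τ0 W (D2 k0) η
          - (E k0 η * E k0 τ) * J τ0 W (D2i k0) η) := by
  rw [← intervalIntegral.integral_ofReal]
  have key : ∀ ξ : ℝ, ((Real.sin (k0 * (2 * ξ - η - τ)) * W ξ : ℝ) : ℂ)
      = ((W ξ : ℝ) : ℂ) *
          (((2 * Complex.I)⁻¹ * ((E k0 η)⁻¹ * (E k0 τ)⁻¹)) * D2 k0 ξ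
          + (-((2 * Complex.I)⁻¹ * (E k0 η * E k0 τ))) * D2i k0 ξ
          + 0 * one ξ + 0 * one ξ) := by
    intro ξ
    rw [Complex.ofReal_mul, sinC, exp_shift2, exp_shift2']
    simp only [D2, D2i, one]
    ring
  rw [intervalIntegral.integral_congr (fun ξ _ => key ξ)]
  have h := J_lin4 (τ0 := τ0) hW (D2_cont k0) (D2i_cont k0) one_cont one_cont
    ((2 * Complex.I)⁻¹ * ((E k0 η)⁻¹ * (E k0 τ)⁻¹))
    (-((2 * Complex.I)⁻¹ * (E k0 η * E k0 τ))) 0 0 η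
  unfold J at h ⊢
  rw [h]
  ring

lemma rhs1_eq (hW : Continuous W) (τ : ℝ) :
    ((∫ η in τ0..τ, Real.sin (k0 * (η - τ)) * W η *
        ∫ ξ in τ0..η, Real.sin (k0 * (2 * ξ - η - τ)) * W ξ : ℝ) : ℂ)
      = (-(4:ℂ)⁻¹) * ((E k0 τ)⁻¹) ^ 2 * J τ0 W (fun η => J τ0 W (D2 k0) η) τ
      + (4:ℂ)⁻¹ * J τ0 W (fun η => D2i k0 η * J τ0 W (D2 k0) η) τ
      + (4:ℂ)⁻¹ * J τ0 W (fun η => D2 k0 η * J τ0 W (D2i k0) η) τ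
      + (-(4:ℂ)⁻¹) * E k0 τ ^ 2 * J τ0 W (fun η => J τ0 W (D2i k0) η) τ := by
  rw [← intervalIntegral.integral_ofReal]
  have key : ∀ η : ℝ, ((Real.sin (k0 * (η - τ)) * W η *
        ∫ ξ in τ0..η, Real.sin (k0 * (2 * ξ - η - τ)) * W ξ : ℝ) : ℂ)
      = ((W η : ℝ) : ℂ) *
          ((-(4:ℂ)⁻¹ * ((E k0 τ)⁻¹) ^ 2) * J τ0 W (D2 k0) η
          + (4:ℂ)⁻¹ * (D2i k0 η * J τ0 W (D2 k0) η)
          + (4:ℂ)⁻¹ * (D2 k0 η * J τ0 W (D2i k0) η)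
          + (-(4:ℂ)⁻¹ * E k0 τ ^ 2) * J τ0 W (D2i k0) η) := by
    intro η
    rw [Complex.ofReal_mul, Complex.ofReal_mul, inner_eq hW τ η]
    simp only [D2, D2i, one]
    linear_combination
      ((2 * Complex.I)⁻¹ * ((W η : ℝ) : ℂ) * J τ0 W (D2 k0) η) * sin_mul_ff k0 η τ
      - ((2 * Complex.I)⁻¹ * ((W η : ℝ) : ℂ) * J τ0 W (D2i k0) η) * sin_mul_ee k0 η τ
      + (((W η : ℝ) : ℂ) * ((((E k0 τ)⁻¹) ^ 2 - ((E k0 η)⁻¹) ^ 2) * J τ0 W (D2 k0) η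
          - (E k0 η ^ 2 - E k0 τ ^ 2) * J τ0 W (D2i k0) η)) * I2_sq
  rw [intervalIntegral.integral_congr (fun η _ => key η)]
  have h := J_lin4 (τ0 := τ0) (g2 := fun η => D2i k0 η * J τ0 W (D2 k0) η)
    (g3 := fun η => D2 k0 η * J τ0 W (D2i k0) η) hW (J_cont (τ0 := τ0) hW (D2_cont k0))
    ((D2i_cont k0).mul (J_cont (τ0 := τ0) hW (D2_cont k0)))
    ((D2_cont k0).mul (J_cont (τ0 := τ0) hW (D2i_cont k0)))
    (J_cont (τ0 := τ0) hW (D2i_cont k0))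
    (-(4:ℂ)⁻¹ * ((E k0 τ)⁻¹) ^ 2) ((4:ℂ)⁻¹) ((4:ℂ)⁻¹) (-(4:ℂ)⁻¹ * E k0 τ ^ 2) τ
  unfold J at h ⊢
  rw [h]

lemma J_add {g : ℝ → ℂ} {f : ℝ → ℂ} (hW : Continuous W) (hf : Continuous f)
    (hg : Continuous g) (t : ℝ) :
    J τ0 W (fun x => f x + g x) t = J τ0 W f t + J τ0 W g t := by
  unfold J
  rw [← intervalIntegral.integral_add (f := fun x => ((W x : ℝ) : ℂ) * f x)
    (g := fun x => ((W x : ℝ) : ℂ) * g x)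
    (((W_contC hW).mul hf).intervalIntegrable (μ := volume) τ0 t)
    (((W_contC hW).mul hg).intervalIntegrable (μ := volume) τ0 t)]
  exact intervalIntegral.integral_congr (fun x _ => by ring)

lemma Jd_conj (t : ℝ) : (starRingEnd ℂ) (J τ0 W (D2 k0) t) = J τ0 W (D2i k0) t := by
  rw [J_conj]; exact J_congr (fun x => D2_conj k0 x) t

lemma Jdi_conj (t : ℝ) : (starRingEnd ℂ) (J τ0 W (D2i k0) t) = J τ0 W (D2 k0) t := by
  rw [J_conj]; exact J_congr (fun x => D2i_conj k0 x) t

lemma J1_conj (t : ℝ) : (starRingEnd ℂ) (J τ0 W one t) = J τ0 W one t := by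
  rw [J_conj]; exact J_congr (fun x => by simp [one]) t

lemma A_conj (τ : ℝ) : (starRingEnd ℂ) (J τ0 W (fun η => J τ0 W (D2 k0) η) τ)
    = J τ0 W (fun η => J τ0 W (D2i k0) η) τ := by
  rw [J_conj]; exact J_congr (fun x => Jd_conj x) τ

lemma Abar_conj (τ : ℝ) : (starRingEnd ℂ) (J τ0 W (fun η => J τ0 W (D2i k0) η) τ)
    = J τ0 W (fun η => J τ0 W (D2 k0) η) τ := by
  rw [J_conj]; exact J_congr (fun x => Jdi_conj x) τ

lemma B_conj (τ : ℝ) : (starRingEnd ℂ) (J τ0 W (fun η => D2 k0 η * J τ0 W one η) τ)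
    = J τ0 W (fun η => D2i k0 η * J τ0 W one η) τ := by
  rw [J_conj]; exact J_congr (fun x => by rw [map_mul, D2_conj, J1_conj]) τ

lemma M_conj (τ : ℝ) : (starRingEnd ℂ) (J τ0 W (fun η => D2i k0 η * J τ0 W (D2 k0) η) τ)
    = J τ0 W (fun η => D2 k0 η * J τ0 W (D2i k0) η) τ := by
  rw [J_conj]; exact J_congr (fun x => by rw [map_mul, D2i_conj, Jd_conj]) τ

lemma U_conj (τ : ℝ) : (starRingEnd ℂ) (J τ0 W (fun η => J τ0 W one η) τ)
    = J τ0 W (fun η => J τ0 W one η) τ := by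
  rw [J_conj]; exact J_congr (fun x => J1_conj x) τ

lemma hm_id (hW : Continuous W) (τ : ℝ) :
    J τ0 W (D2 k0) τ * J τ0 W (D2i k0) τ
      = J τ0 W (fun η => D2 k0 η * J τ0 W (D2i k0) η) τ
        + J τ0 W (fun η => D2i k0 η * J τ0 W (D2 k0) η) τ := by
  rw [J_mul hW (D2_cont k0) (D2i_cont k0),
    J_add (f := fun x => D2 k0 x * J τ0 W (D2i k0) x) (g := fun x => J τ0 W (D2 k0) x * D2i k0 x)
      hW ((D2_cont k0).mul (J_cont (τ0 := τ0) hW (D2i_cont k0)))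
      ((J_cont (τ0 := τ0) hW (D2_cont k0)).mul (D2i_cont k0))]
  rw [J_congr (f := fun x => J τ0 W (D2 k0) x * D2i k0 x)
      (g := fun x => D2i k0 x * J τ0 W (D2 k0) x) (fun x => mul_comm _ _) τ]

lemma hb_id (hW : Continuous W) (τ : ℝ) :
    J τ0 W (D2 k0) τ * J τ0 W one τ
      = J τ0 W (fun η => D2 k0 η * J τ0 W one η) τ
        + J τ0 W (fun η => J τ0 W (D2 k0) η) τ := by
  rw [J_mul hW (D2_cont k0) one_cont,
    J_add (f := fun x => D2 k0 x * J τ0 W one x) (g := fun x => J τ0 W (D2 k0) x * one x)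
      hW ((D2_cont k0).mul (J_cont (τ0 := τ0) hW one_cont))
      ((J_cont (τ0 := τ0) hW (D2_cont k0)).mul one_cont)]
  rw [J_congr (f := fun x => J τ0 W (D2 k0) x * one x)
      (g := fun x => J τ0 W (D2 k0) x) (fun x => by simp [one]) τ]

lemma hbb_id (hW : Continuous W) (τ : ℝ) :
    J τ0 W (D2i k0) τ * J τ0 W one τ
      = J τ0 W (fun η => D2i k0 η * J τ0 W one η) τ
        + J τ0 W (fun η => J τ0 W (D2i k0) η) τ := by
  rw [J_mul hW (D2i_cont k0) one_cont,
    J_add (f := fun x => D2i k0 x * J τ0 W one x) (g := fun x => J τ0 W (D2i k0) x * one x)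
      hW ((D2i_cont k0).mul (J_cont (τ0 := τ0) hW one_cont))
      ((J_cont (τ0 := τ0) hW (D2i_cont k0)).mul one_cont)]
  rw [J_congr (f := fun x => J τ0 W (D2i k0) x * one x)
      (g := fun x => J τ0 W (D2i k0) x) (fun x => by simp [one]) τ]

lemma hu_id (hW : Continuous W) (τ : ℝ) :
    J τ0 W one τ * J τ0 W one τ = 2 * J τ0 W (fun η => J τ0 W one η) τ := by
  rw [J_mul hW one_cont one_cont,
    J_congr (f := fun x => one x * J τ0 W one x + J τ0 W one x * one x)
      (g := fun x => J τ0 W one x + J τ0 W one x) (fun x => by simp [one]) τ,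
    J_add hW (J_cont (τ0 := τ0) hW one_cont) (J_cont (τ0 := τ0) hW one_cont)]
  ring

lemma hcc_id (hk0 : 0 < k0) :
    (Real.sqrt (2*k0) : ℂ)⁻¹ * (Real.sqrt (2*k0) : ℂ)⁻¹ = (2*(k0:ℂ))⁻¹ := by
  rw [← mul_inv, ← Complex.ofReal_mul, Real.mul_self_sqrt (by linarith)]
  push_cast
  ring

lemma main_W (hk0 : 0 < k0) (hW : Continuous W) (τ : ℝ) :
    chi k0 τ0 W 0 τ * (starRingEnd ℂ) (chi k0 τ0 W 2 τ)
      + chi k0 τ0 W 1 τ * (starRingEnd ℂ) (chi k0 τ0 W 1 τ)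
      + chi k0 τ0 W 2 τ * (starRingEnd ℂ) (chi k0 τ0 W 0 τ)
    = (((k0 ^ 3)⁻¹ * ∫ η in τ0..τ, Real.sin (k0 * (η - τ)) * W η *
          ∫ ξ in τ0..η, Real.sin (k0 * (2 * ξ - η - τ)) * W ξ : ℝ) : ℂ) := by
  have h0 : chi k0 τ0 W 0 τ = (Real.sqrt (2*k0) : ℂ)⁻¹ * E k0 τ := rfl
  have h1 := chi1_eq (k0 := k0) (τ0 := τ0) hW τ
  have h2 := chi2_eq (k0 := k0) (τ0 := τ0) hW τ
  have h0c : (starRingEnd ℂ) (chi k0 τ0 W 0 τ)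
      = (Real.sqrt (2*k0):ℂ)⁻¹ * (E k0 τ)⁻¹ := by
    rw [h0]; rw [map_mul, map_inv₀, Complex.conj_ofReal, E_conj]
  have h1c : (starRingEnd ℂ) (chi k0 τ0 W 1 τ)
      = -((Real.sqrt (2*k0):ℂ)⁻¹ * (k0:ℂ)⁻¹ * (2*Complex.I)⁻¹) *
          (E k0 τ * J τ0 W (D2i k0) τ - (E k0 τ)⁻¹ * J τ0 W one τ) := by
    rw [h1]
    simp only [map_mul, map_sub, map_inv₀, Complex.conj_ofReal, Complex.conj_I, map_ofNat,
      E_conj, inv_inv, Jd_conj, J1_conj]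
    ring
  have h2c : (starRingEnd ℂ) (chi k0 τ0 W 2 τ)
      = (Real.sqrt (2 * k0) : ℂ)⁻¹ * (k0 : ℂ)⁻¹ ^ 2 * (-(4:ℂ)⁻¹) * E k0 τ *
          J τ0 W (fun η => J τ0 W (D2i k0) η) τ
      + (Real.sqrt (2 * k0) : ℂ)⁻¹ * (k0 : ℂ)⁻¹ ^ 2 * (4:ℂ)⁻¹ * E k0 τ *
          J τ0 W (fun η => D2i k0 η * J τ0 W one η) τ
      + (Real.sqrt (2 * k0) : ℂ)⁻¹ * (k0 : ℂ)⁻¹ ^ 2 * (4:ℂ)⁻¹ * (E k0 τ)⁻¹ *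
          J τ0 W (fun η => D2 k0 η * J τ0 W (D2i k0) η) τ
      + (Real.sqrt (2 * k0) : ℂ)⁻¹ * (k0 : ℂ)⁻¹ ^ 2 * (-(4:ℂ)⁻¹) * (E k0 τ)⁻¹ *
          J τ0 W (fun η => J τ0 W one η) τ := by
    rw [h2]
    simp only [map_add, map_mul, map_neg, map_inv₀, map_pow, Complex.conj_ofReal,
      Complex.conj_I, map_ofNat, E_conj, inv_inv, A_conj, B_conj, M_conj, U_conj]
  rw [h0c, h1c, h2c, h0, h1, h2, Complex.ofReal_mul, Complex.ofReal_inv, Complex.ofReal_pow,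
    rhs1_eq hW τ]
  linear_combination
    (-(((Real.sqrt (2*k0):ℂ)⁻¹)^2 * ((k0:ℂ)⁻¹)^2 *
        (((E k0 τ)⁻¹ * J τ0 W (D2 k0) τ - E k0 τ * J τ0 W one τ)
          * (E k0 τ * J τ0 W (D2i k0) τ - (E k0 τ)⁻¹ * J τ0 W one τ)))) * I2_sq
    + (((Real.sqrt (2*k0):ℂ)⁻¹)^2 * ((k0:ℂ)⁻¹)^2 * (4:ℂ)⁻¹ * E k0 τ * (E k0 τ)⁻¹)
        * hm_id hW τ
    + (-(((Real.sqrt (2*k0):ℂ)⁻¹)^2 * ((k0:ℂ)⁻¹)^2 * (4:ℂ)⁻¹ * ((E k0 τ)⁻¹)^2))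
        * hb_id hW τ
    + (-(((Real.sqrt (2*k0):ℂ)⁻¹)^2 * ((k0:ℂ)⁻¹)^2 * (4:ℂ)⁻¹ * (E k0 τ)^2))
        * hbb_id hW τ
    + (((Real.sqrt (2*k0):ℂ)⁻¹)^2 * ((k0:ℂ)⁻¹)^2 * (4:ℂ)⁻¹ * E k0 τ * (E k0 τ)⁻¹)
        * hu_id hW τ
    + ((2:ℂ)⁻¹ * ((k0:ℂ)⁻¹)^2 * E k0 τ * (E k0 τ)⁻¹ *
        (J τ0 W (fun η => D2 k0 η * J τ0 W (D2i k0) η) τ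
          + J τ0 W (fun η => D2i k0 η * J τ0 W (D2 k0) η) τ)
      - (2:ℂ)⁻¹ * ((k0:ℂ)⁻¹)^2 *
        (((E k0 τ)⁻¹)^2 * J τ0 W (fun η => J τ0 W (D2 k0) η) τ
          + (E k0 τ)^2 * J τ0 W (fun η => J τ0 W (D2i k0) η) τ)) * hcc_id hk0
    + ((4:ℂ)⁻¹ * ((k0:ℂ)⁻¹)^3 *
        (J τ0 W (fun η => D2 k0 η * J τ0 W (D2i k0) η) τ
          + J τ0 W (fun η => D2i k0 η * J τ0 W (D2 k0) η) τ)) * E_cancel k0 τ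


/-- **The second-order term of the mode expansion** (second order computation in
Pinamonti–Siemssen, Proposition 2.1): for `V` continuously differentiable with `V(τ₀) = 0`,
`χ⁰ conj(χ²) + |χ¹|² + χ² conj(χ⁰)
  = k₀⁻³ ∫ sin(k₀(η−τ)) V(η) (∫_{τ₀}^η sin(k₀(2ξ−η−τ)) V(ξ) dξ) dη
  = (2k₀⁴)⁻¹ ∫ sin(k₀(η−τ)) V(η) (∫_{τ₀}^η cos(k₀(2ξ−η−τ)) V'(ξ) dξ − cos(k₀(η−τ)) V(η)) dη`. -/
theorem second_order_term (τ0 τ1 k0 : ℝ) (hτ : τ0 < τ1) (hk0 : 0 < k0)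
    (V V' : ℝ → ℝ)
    (hVder : ∀ τ ∈ Set.Icc τ0 τ1, HasDerivWithinAt V (V' τ) (Set.Icc τ0 τ1) τ)
    (hV'cont : ContinuousOn V' (Set.Icc τ0 τ1))
    (hV0 : V τ0 = 0) :
    ∀ τ ∈ Set.Icc τ0 τ1,
      chi k0 τ0 V 0 τ * (starRingEnd ℂ) (chi k0 τ0 V 2 τ)
          + chi k0 τ0 V 1 τ * (starRingEnd ℂ) (chi k0 τ0 V 1 τ)
          + chi k0 τ0 V 2 τ * (starRingEnd ℂ) (chi k0 τ0 V 0 τ)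
        = (((k0 ^ 3)⁻¹ * ∫ η in τ0..τ, Real.sin (k0 * (η - τ)) * V η *
              ∫ ξ in τ0..η, Real.sin (k0 * (2 * ξ - η - τ)) * V ξ : ℝ) : ℂ) ∧
      chi k0 τ0 V 0 τ * (starRingEnd ℂ) (chi k0 τ0 V 2 τ)
          + chi k0 τ0 V 1 τ * (starRingEnd ℂ) (chi k0 τ0 V 1 τ)
          + chi k0 τ0 V 2 τ * (starRingEnd ℂ) (chi k0 τ0 V 0 τ)
        = (((2 * k0 ^ 4)⁻¹ * ∫ η in τ0..τ, Real.sin (k0 * (η - τ)) * V η *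
              ((∫ ξ in τ0..η, Real.cos (k0 * (2 * ξ - η - τ)) * V' ξ)
                - Real.cos (k0 * (η - τ)) * V η) : ℝ) : ℂ) := by
  intro τ hτmem
  obtain ⟨hτ0, hτ1⟩ := hτmem
  have hVcont : ContinuousOn V (Set.Icc τ0 τ1) := fun x hx => (hVder x hx).continuousWithinAt
  set W : ℝ → ℝ := Set.IccExtend hτ.le (Set.restrict (Set.Icc τ0 τ1) V) with hWdef
  have hW : Continuous W :=
    continuous_IccExtend_iff.mpr (continuousOn_iff_continuous_restrict.mp hVcont)
  have hWV : ∀ x ∈ Set.Icc τ0 τ1, W x = V x := fun x hx => by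
    rw [hWdef, Set.IccExtend_of_mem _ _ hx]
    rfl
  have hsub : ∀ t ∈ Set.Icc τ0 τ1, Set.uIcc τ0 t ⊆ Set.Icc τ0 τ1 := by
    intro t ht
    rw [Set.uIcc_of_le ht.1]
    exact Set.Icc_subset_Icc le_rfl ht.2
  have hτIcc : τ ∈ Set.Icc τ0 τ1 := ⟨hτ0, hτ1⟩
  -- transfer chi
  have hchi1 : ∀ t ∈ Set.Icc τ0 τ1, chi k0 τ0 V 1 t = chi k0 τ0 W 1 t := by
    intro t ht
    show (∫ η in τ0..t, ((k0⁻¹ * Real.sin (k0 * (η - t)) * V η : ℝ) : ℂ) * chi k0 τ0 V 0 η)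
      = (∫ η in τ0..t, ((k0⁻¹ * Real.sin (k0 * (η - t)) * W η : ℝ) : ℂ) * chi k0 τ0 W 0 η)
    exact intervalIntegral.integral_congr (fun η hη => by rw [hWV η (hsub t ht hη)]; rfl)
  have hchi2 : chi k0 τ0 V 2 τ = chi k0 τ0 W 2 τ := by
    show (∫ η in τ0..τ, ((k0⁻¹ * Real.sin (k0 * (η - τ)) * V η : ℝ) : ℂ) * chi k0 τ0 V 1 η)
      = (∫ η in τ0..τ, ((k0⁻¹ * Real.sin (k0 * (η - τ)) * W η : ℝ) : ℂ) * chi k0 τ0 W 1 η)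
    refine intervalIntegral.integral_congr (fun η hη => ?_)
    rw [hWV η (hsub τ hτIcc hη), hchi1 η (hsub τ hτIcc hη)]
  -- transfer RHS1
  have hR1 : (∫ η in τ0..τ, Real.sin (k0 * (η - τ)) * V η *
        ∫ ξ in τ0..η, Real.sin (k0 * (2 * ξ - η - τ)) * V ξ)
      = (∫ η in τ0..τ, Real.sin (k0 * (η - τ)) * W η *
        ∫ ξ in τ0..η, Real.sin (k0 * (2 * ξ - η - τ)) * W ξ) := by
    refine intervalIntegral.integral_congr (fun η hη => ?_)
    have hηIcc : η ∈ Set.Icc τ0 τ1 := hsub τ hτIcc hη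
    rw [hWV η hηIcc]
    congr 1
    refine intervalIntegral.integral_congr (fun ξ hξ => ?_)
    rw [hWV ξ (hsub η hηIcc hξ)]
  have goal1 : chi k0 τ0 V 0 τ * (starRingEnd ℂ) (chi k0 τ0 V 2 τ)
      + chi k0 τ0 V 1 τ * (starRingEnd ℂ) (chi k0 τ0 V 1 τ)
      + chi k0 τ0 V 2 τ * (starRingEnd ℂ) (chi k0 τ0 V 0 τ)
      = (((k0 ^ 3)⁻¹ * ∫ η in τ0..τ, Real.sin (k0 * (η - τ)) * V η *
          ∫ ξ in τ0..η, Real.sin (k0 * (2 * ξ - η - τ)) * V ξ : ℝ) : ℂ) := by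
    rw [hchi1 τ hτIcc, hchi2, hR1]
    exact main_W hk0 hW τ
  refine ⟨goal1, ?_⟩
  -- second identity: integration by parts on the inner integral
  have hIBP : ∀ η ∈ Set.uIcc τ0 τ,
      (∫ ξ in τ0..η, Real.cos (k0 * (2 * ξ - η - τ)) * V' ξ)
          - Real.cos (k0 * (η - τ)) * V η
        = 2 * k0 * ∫ ξ in τ0..η, Real.sin (k0 * (2 * ξ - η - τ)) * V ξ := by
    intro η hη
    have hηIcc : η ∈ Set.Icc τ0 τ1 := hsub τ hτIcc hη
    have hsubη : Set.uIcc τ0 η ⊆ Set.Icc τ0 τ1 := hsub η hηIcc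
    have hlin : Continuous fun x : ℝ => k0 * (2 * x - η - τ) :=
      continuous_const.mul (((continuous_const.mul continuous_id).sub
        continuous_const).sub continuous_const)
    set u : ℝ → ℝ := fun ξ => -(2 * k0)⁻¹ * Real.cos (k0 * (2 * ξ - η - τ)) with hudef
    have hucont : Continuous u := continuous_const.mul (Real.continuous_cos.comp hlin)
    have hud : ∀ ξ : ℝ, HasDerivAt u (Real.sin (k0 * (2 * ξ - η - τ))) ξ := by
      intro ξ
      have h1 : HasDerivAt (fun x : ℝ => k0 * (2 * x - η - τ)) (2 * k0) ξ := by
        have h := ((hasDerivAt_id ξ).const_mul (2 * k0)).add_const (-(k0 * (η + τ)))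
        refine (h.congr_deriv (by ring)).congr_of_eventuallyEq (Eventually.of_forall fun x => ?_)
        simp only [id_eq]
        ring
      have h2 := (h1.cos).const_mul (-(2 * k0)⁻¹)
      have : (-(2 * k0)⁻¹) * (-Real.sin (k0 * (2 * ξ - η - τ)) * (2 * k0))
          = Real.sin (k0 * (2 * ξ - η - τ)) := by
        field_simp
      rw [this] at h2
      exact h2
    have hVξ : ∀ ξ ∈ Set.uIcc τ0 η, HasDerivWithinAt V (V' ξ) (Set.uIcc τ0 η) ξ :=
      fun ξ hξ => (hVder ξ (hsubη hξ)).mono hsubη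
    have huξ : ∀ ξ ∈ Set.uIcc τ0 η, HasDerivWithinAt u
        (Real.sin (k0 * (2 * ξ - η - τ))) (Set.uIcc τ0 η) ξ :=
      fun ξ _ => (hud ξ).hasDerivWithinAt
    have hu'int : IntervalIntegrable (fun ξ => Real.sin (k0 * (2 * ξ - η - τ))) volume τ0 η :=
      (Real.continuous_sin.comp hlin).intervalIntegrable τ0 η
    have hV'int : IntervalIntegrable V' volume τ0 η :=
      (hV'cont.mono hsubη).intervalIntegrable
    have key := intervalIntegral.integral_deriv_mul_eq_sub_of_hasDerivWithinAt
      huξ hVξ hu'int hV'int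
    have hsplit : (∫ ξ in τ0..η, (Real.sin (k0 * (2 * ξ - η - τ)) * V ξ + u ξ * V' ξ))
        = (∫ ξ in τ0..η, Real.sin (k0 * (2 * ξ - η - τ)) * V ξ)
          + ∫ ξ in τ0..η, u ξ * V' ξ := by
      refine intervalIntegral.integral_add ?_ ?_
      · exact (((Real.continuous_sin.comp hlin).continuousOn).mul
          (hVcont.mono hsubη)).intervalIntegrable
      · exact ((hucont.continuousOn).mul
          (hV'cont.mono hsubη)).intervalIntegrable
    rw [hsplit] at key
    have huV' : (∫ ξ in τ0..η, u ξ * V' ξ)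
        = -(2 * k0)⁻¹ * ∫ ξ in τ0..η, Real.cos (k0 * (2 * ξ - η - τ)) * V' ξ := by
      rw [← intervalIntegral.integral_const_mul]
      exact intervalIntegral.integral_congr (fun ξ _ => by rw [hudef]; ring)
    rw [huV'] at key
    have huη : u η = -(2 * k0)⁻¹ * Real.cos (k0 * (η - τ)) := by
      show -(2 * k0)⁻¹ * Real.cos (k0 * (2 * η - η - τ)) = _
      rw [show k0 * (2 * η - η - τ) = k0 * (η - τ) by ring]
    have huτ0 : u τ0 * V τ0 = 0 := by rw [hV0]; ring
    rw [huη, huτ0] at key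
    have hk0' : (2 : ℝ) * k0 ≠ 0 := by positivity
    field_simp at key ⊢
    linarith [key]
  have hR2 : ((2 * k0 ^ 4)⁻¹ * ∫ η in τ0..τ, Real.sin (k0 * (η - τ)) * V η *
        ((∫ ξ in τ0..η, Real.cos (k0 * (2 * ξ - η - τ)) * V' ξ)
          - Real.cos (k0 * (η - τ)) * V η))
      = ((k0 ^ 3)⁻¹ * ∫ η in τ0..τ, Real.sin (k0 * (η - τ)) * V η *
          ∫ ξ in τ0..η, Real.sin (k0 * (2 * ξ - η - τ)) * V ξ) := by
    have : (∫ η in τ0..τ, Real.sin (k0 * (η - τ)) * V η *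
          ((∫ ξ in τ0..η, Real.cos (k0 * (2 * ξ - η - τ)) * V' ξ)
            - Real.cos (k0 * (η - τ)) * V η))
        = (∫ η in τ0..τ, (2 * k0) * (Real.sin (k0 * (η - τ)) * V η *
            ∫ ξ in τ0..η, Real.sin (k0 * (2 * ξ - η - τ)) * V ξ)) := by
      refine intervalIntegral.integral_congr (fun η hη => ?_)
      rw [hIBP η hη]
      ring
    rw [this, intervalIntegral.integral_const_mul]
    have : k0 ≠ 0 := hk0.ne'
    field_simp
  rw [hR2]
  exact goal1

end Modes
end
end

section
/- For every τ ∈ [τ₀, τ₁], the double series Σ_{n=3}^∞ Σ_{l=0}^n χ^l(τ) · conj(χ^{n−l}(τ)) converges absolutely, and its sum S(τ) satisfies |S(τ)| ≤ (4/k₀⁴) ( ∫_{τ₀}^τ |V(η)| dη )³ exp( 2 ∫_{τ₀}^τ (τ − η) |V(η)| dη ). -/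
open MeasureTheory Filter Set Topology
open scoped Nat

noncomputable section

namespace Modes

/-! ### Auxiliary lemmas -/

lemma chi_congr (k0 τ0 τ1 : ℝ) {V W : ℝ → ℝ} (hVW : Set.EqOn V W (Set.Icc τ0 τ1))
    (n : ℕ) : ∀ η ∈ Set.Icc τ0 τ1, chi k0 τ0 V n η = chi k0 τ0 W n η := by
  induction n with
  | zero => intro η _; rfl
  | succ n ih =>
    intro η hη
    show (∫ s in τ0..η, _) = ∫ s in τ0..η, _
    apply intervalIntegral.integral_congr
    intro s hs
    have hs' : s ∈ Set.Icc τ0 τ1 := by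
      have h1 : Set.uIcc τ0 η ⊆ Set.Icc τ0 τ1 := by
        rw [Set.uIcc_of_le hη.1]
        exact Set.Icc_subset_Icc le_rfl hη.2
      exact h1 hs
    simp only [hVW hs', ih s hs']

lemma norm_chi_zero (k0 τ0 : ℝ) (W : ℝ → ℝ) (η : ℝ) :
    ‖chi k0 τ0 W 0 η‖ = (Real.sqrt (2 * k0))⁻¹ := by
  show ‖(Real.sqrt (2 * k0) : ℂ)⁻¹ * Complex.exp (Complex.I * k0 * η)‖ = _
  rw [norm_mul, norm_inv, Complex.norm_real, Real.norm_eq_abs,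
    abs_of_nonneg (Real.sqrt_nonneg _)]
  have h1 : ‖Complex.exp (Complex.I * k0 * η)‖ = 1 := by
    rw [Complex.norm_exp]
    have h2 : (Complex.I * k0 * η).re = 0 := by simp
    rw [h2, Real.exp_zero]
  rw [h1, mul_one]

lemma primitive_hasDerivAt {g : ℝ → ℝ} (hg : Continuous g) (τ0 x : ℝ) :
    HasDerivAt (fun y => ∫ s in τ0..y, g s) (g x) x :=
  intervalIntegral.integral_hasDerivAt_right (hg.intervalIntegrable _ _)
    (hg.stronglyMeasurableAtFilter _ _) hg.continuousAt

lemma primitive_continuous {g : ℝ → ℝ} (hg : Continuous g) (τ0 : ℝ) :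
    Continuous (fun y => ∫ s in τ0..y, g s) := by
  rw [continuous_iff_continuousAt]
  exact fun x => (primitive_hasDerivAt hg τ0 x).continuousAt

/-- FTC computation: `∫ g·Gᵐ = G^{m+1}/(m+1)` where `G` is the primitive of `g`. -/
lemma integral_g_pow {g : ℝ → ℝ} (hg : Continuous g) (τ0 η : ℝ) (m : ℕ) :
    ∫ s in τ0..η, g s * (∫ t in τ0..s, g t) ^ m
      = (∫ t in τ0..η, g t) ^ (m + 1) / (m + 1) := by
  set G : ℝ → ℝ := fun x => ∫ t in τ0..x, g t with hGdef
  have hGd : ∀ x, HasDerivAt G (g x) x := fun x => primitive_hasDerivAt hg τ0 x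
  have hGc : Continuous G := primitive_continuous hg τ0
  have hF : ∀ x ∈ Set.uIcc τ0 η,
      HasDerivAt (fun y => G y ^ (m + 1) / (m + 1)) (g x * G x ^ m) x := by
    intro x _
    have h := ((hGd x).pow (m + 1)).div_const ((m : ℝ) + 1)
    refine h.congr_deriv ?_
    have hne : ((m : ℝ) + 1) ≠ 0 := by positivity
    push_cast
    field_simp
  have hint : IntervalIntegrable (fun x => g x * G x ^ m) volume τ0 η :=
    (hg.mul (hGc.pow m)).intervalIntegrable _ _
  have heq := intervalIntegral.integral_eq_sub_of_hasDerivAt hF hint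
  rw [heq]
  have hG0 : G τ0 = 0 := by simp [hGdef]
  rw [hG0]
  push_cast
  ring

lemma chi_continuous {k0 τ0 : ℝ} {W : ℝ → ℝ} (hW : Continuous W) (n : ℕ) :
    Continuous (chi k0 τ0 W n) := by
  induction n with
  | zero =>
    show Continuous fun τ : ℝ =>
      (Real.sqrt (2 * k0) : ℂ)⁻¹ * Complex.exp (Complex.I * k0 * τ)
    fun_prop
  | succ n ih =>
    show Continuous fun τ : ℝ =>
      ∫ η in τ0..τ, ((k0⁻¹ * Real.sin (k0 * (η - τ)) * W η : ℝ) : ℂ) * chi k0 τ0 W n η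
    apply intervalIntegral.continuous_parametric_intervalIntegral_of_continuous
      (f := fun (τ : ℝ) (η : ℝ) =>
        ((k0⁻¹ * Real.sin (k0 * (η - τ)) * W η : ℝ) : ℂ) * chi k0 τ0 W n η)
      ?_ continuous_id
    apply Continuous.mul
    · apply Complex.continuous_ofReal.comp
      fun_prop
    · exact ih.comp continuous_snd

/-- The pure `A`-bound: `‖χⁿ(η)‖ ≤ C (A(η)/k₀)ⁿ / n!`. -/
lemma chi_bound_A {k0 τ0 : ℝ} {W : ℝ → ℝ} (hk0 : 0 < k0) (hW : Continuous W) :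
    ∀ n : ℕ, ∀ η, τ0 ≤ η →
      ‖chi k0 τ0 W n η‖ ≤
        (Real.sqrt (2 * k0))⁻¹ * (((∫ s in τ0..η, |W s|) / k0) ^ n / n !) := by
  have hWa : Continuous fun s => |W s| := hW.abs
  set C := (Real.sqrt (2 * k0))⁻¹ with hCdef
  have hC0 : 0 ≤ C := inv_nonneg.2 (Real.sqrt_nonneg _)
  set A : ℝ → ℝ := fun x => ∫ s in τ0..x, |W s| with hAdef
  have hAc : Continuous A := primitive_continuous hWa τ0
  have hA0 : ∀ η, τ0 ≤ η → 0 ≤ A η := fun η hη =>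
    intervalIntegral.integral_nonneg hη fun s _ => abs_nonneg _
  intro n
  induction n with
  | zero =>
    intro η hη
    rw [norm_chi_zero, ← hCdef]
    simp
  | succ n ih =>
    intro η hη
    have hAη0 : 0 ≤ A η := hA0 η hη
    have hint : IntervalIntegrable
        (fun s => |W s| / k0 * (C * ((A s / k0) ^ n / n !))) volume τ0 η := by
      apply Continuous.intervalIntegrable
      fun_prop
    have key : ‖chi k0 τ0 W (n + 1) η‖ ≤
        |∫ s in τ0..η, |W s| / k0 * (C * ((A s / k0) ^ n / n !))| := by
      show ‖∫ s in τ0..η, ((k0⁻¹ * Real.sin (k0 * (s - η)) * W s : ℝ) : ℂ)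
          * chi k0 τ0 W n s‖ ≤ _
      apply intervalIntegral.norm_integral_le_abs_of_norm_le _ hint
      refine (ae_restrict_iff' measurableSet_uIoc).2 (Filter.Eventually.of_forall ?_)
      intro s hs
      rw [Set.uIoc_of_le hη] at hs
      have hs0 : τ0 ≤ s := hs.1.le
      rw [norm_mul, Complex.norm_real, Real.norm_eq_abs]
      have h1 : |k0⁻¹ * Real.sin (k0 * (s - η)) * W s| ≤ |W s| / k0 := by
        rw [abs_mul, abs_mul, abs_of_pos (inv_pos.2 hk0)]
        have hsin := Real.abs_sin_le_one (k0 * (s - η))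
        calc k0⁻¹ * |Real.sin (k0 * (s - η))| * |W s|
            ≤ k0⁻¹ * 1 * |W s| := by
              apply mul_le_mul_of_nonneg_right _ (abs_nonneg _)
              exact mul_le_mul_of_nonneg_left hsin (inv_nonneg.2 hk0.le)
          _ = |W s| / k0 := by field_simp
      exact mul_le_mul h1 (ih s hs0) (norm_nonneg _) (by positivity)
    refine key.trans ?_
    have hrw : (fun s => |W s| / k0 * (C * ((A s / k0) ^ n / n !)))
        = fun s => C / (k0 ^ (n + 1) * n !) * (|W s| * A s ^ n) := by
      funext s
      have hk0n : (k0 : ℝ) ≠ 0 := hk0.ne'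
      have hfac : ((n : ℕ)! : ℝ) ≠ 0 := by positivity
      rw [div_pow]
      field_simp
      ring
    rw [hrw, intervalIntegral.integral_const_mul]
    have hgpow := integral_g_pow hWa τ0 η n
    rw [hgpow]
    have hval : C / (k0 ^ (n + 1) * n !) * (A η ^ (n + 1) / (n + 1))
        = C * ((A η / k0) ^ (n + 1) / (n + 1)!) := by
      have hk0n : (k0 : ℝ) ≠ 0 := hk0.ne'
      rw [Nat.factorial_succ]
      push_cast
      rw [div_pow]
      field_simp
      try exact Or.inl trivial
    rw [hval, abs_of_nonneg]
    positivity

/-- The mixed bound: `‖χ^{j+m}(η)‖ ≤ C (A(η)/k₀)ʲ/j! · B(η)ᵐ/m!` for `τ₀ ≤ η ≤ τ`,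
where `B(η) = ∫_{τ₀}^η (τ−s)|W(s)|`. -/
lemma chi_bound_AB {k0 τ0 τ : ℝ} {W : ℝ → ℝ} (hk0 : 0 < k0) (hW : Continuous W)
    (j : ℕ) : ∀ m : ℕ, ∀ η, τ0 ≤ η → η ≤ τ →
      ‖chi k0 τ0 W (j + m) η‖ ≤
        (Real.sqrt (2 * k0))⁻¹ * (((∫ s in τ0..η, |W s|) / k0) ^ j / j !)
          * ((∫ s in τ0..η, (τ - s) * |W s|) ^ m / m !) := by
  have hWa : Continuous fun s => |W s| := hW.abs
  have hg : Continuous fun s => (τ - s) * |W s| := by fun_prop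
  set C := (Real.sqrt (2 * k0))⁻¹ with hCdef
  have hC0 : 0 ≤ C := inv_nonneg.2 (Real.sqrt_nonneg _)
  set A : ℝ → ℝ := fun x => ∫ s in τ0..x, |W s| with hAdef
  set B : ℝ → ℝ := fun x => ∫ s in τ0..x, (τ - s) * |W s| with hBdef
  have hAc : Continuous A := primitive_continuous hWa τ0
  have hBc : Continuous B := primitive_continuous hg τ0
  have hA0 : ∀ η, τ0 ≤ η → 0 ≤ A η := fun η hη =>
    intervalIntegral.integral_nonneg hη fun s _ => abs_nonneg _
  have hB0 : ∀ η, τ0 ≤ η → η ≤ τ → 0 ≤ B η := fun η hη hητ =>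
    intervalIntegral.integral_nonneg hη fun s hs =>
      mul_nonneg (by linarith [hs.2]) (abs_nonneg _)
  have hAmono : ∀ s η, τ0 ≤ s → s ≤ η → A s ≤ A η := by
    intro s η h1 h2
    have hadd : A η = A s + ∫ t in s..η, |W t| :=
      (intervalIntegral.integral_add_adjacent_intervals
        (hWa.intervalIntegrable _ _) (hWa.intervalIntegrable _ _)).symm
    have hpos : 0 ≤ ∫ t in s..η, |W t| :=
      intervalIntegral.integral_nonneg h2 fun t _ => abs_nonneg _
    rw [hadd]; linarith
  intro m
  induction m with
  | zero =>
    intro η hη _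
    have h := chi_bound_A hk0 hW j η hη
    rw [← hCdef] at h
    simpa only [Nat.add_zero, pow_zero, Nat.factorial_zero, Nat.cast_one, div_one,
      mul_one] using h
  | succ m ih =>
    intro η hη hητ
    have hAη0 : 0 ≤ A η := hA0 η hη
    have hint : IntervalIntegrable
        (fun s => (τ - s) * |W s| * (C * ((A η / k0) ^ j / j !) * (B s ^ m / m !)))
        volume τ0 η := by
      apply Continuous.intervalIntegrable
      fun_prop
    have key : ‖chi k0 τ0 W (j + (m + 1)) η‖ ≤
        |∫ s in τ0..η,
          (τ - s) * |W s| * (C * ((A η / k0) ^ j / j !) * (B s ^ m / m !))| := by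
      show ‖∫ s in τ0..η, ((k0⁻¹ * Real.sin (k0 * (s - η)) * W s : ℝ) : ℂ)
          * chi k0 τ0 W (j + m) s‖ ≤ _
      apply intervalIntegral.norm_integral_le_abs_of_norm_le _ hint
      refine (ae_restrict_iff' measurableSet_uIoc).2 (Filter.Eventually.of_forall ?_)
      intro s hs
      rw [Set.uIoc_of_le hη] at hs
      have hs0 : τ0 ≤ s := hs.1.le
      have hsη : s ≤ η := hs.2
      have hsτ : s ≤ τ := le_trans hsη hητ
      rw [norm_mul, Complex.norm_real, Real.norm_eq_abs]
      have h1 : |k0⁻¹ * Real.sin (k0 * (s - η)) * W s| ≤ (τ - s) * |W s| := by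
        rw [abs_mul, abs_mul, abs_of_pos (inv_pos.2 hk0)]
        have hsin : |Real.sin (k0 * (s - η))| ≤ k0 * (η - s) := by
          calc |Real.sin (k0 * (s - η))| ≤ |k0 * (s - η)| := Real.abs_sin_le_abs
            _ = k0 * (η - s) := by
                rw [abs_mul, abs_of_pos hk0, abs_of_nonpos (by linarith : s - η ≤ 0)]
                ring
        calc k0⁻¹ * |Real.sin (k0 * (s - η))| * |W s|
            ≤ k0⁻¹ * (k0 * (η - s)) * |W s| := by
              apply mul_le_mul_of_nonneg_right _ (abs_nonneg _)
              exact mul_le_mul_of_nonneg_left hsin (inv_nonneg.2 hk0.le)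
          _ = (η - s) * |W s| := by field_simp
          _ ≤ (τ - s) * |W s| := by
              apply mul_le_mul_of_nonneg_right _ (abs_nonneg _)
              linarith
      have hAs0 : 0 ≤ A s := hA0 s hs0
      have hBs0 : 0 ≤ B s := hB0 s hs0 hsτ
      have h2 : ‖chi k0 τ0 W (j + m) s‖ ≤
          C * ((A η / k0) ^ j / j !) * (B s ^ m / m !) := by
        refine (ih s hs0 hsτ).trans ?_
        have hps : (A s / k0) ^ j ≤ (A η / k0) ^ j :=
          pow_le_pow_left₀ (by positivity)
            ((div_le_div_iff_of_pos_right hk0).2 (hAmono s η hs0 hsη)) j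
        have hfr : (A s / k0) ^ j / j ! ≤ (A η / k0) ^ j / j ! :=
          (div_le_div_iff_of_pos_right (by positivity : (0:ℝ) < (j ! : ℝ))).2 hps
        have hBsn : (0:ℝ) ≤ B s ^ m / m ! :=
          div_nonneg (pow_nonneg hBs0 m) (by positivity)
        exact mul_le_mul_of_nonneg_right (mul_le_mul_of_nonneg_left hfr hC0) hBsn
      exact mul_le_mul h1 h2 (norm_nonneg _)
        (mul_nonneg (by linarith : (0:ℝ) ≤ τ - s) (abs_nonneg _))
    refine key.trans ?_
    have hrw : (fun s => (τ - s) * |W s| * (C * ((A η / k0) ^ j / j !) * (B s ^ m / m !)))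
        = fun s => C * ((A η / k0) ^ j / j !) / m ! * ((τ - s) * |W s| * B s ^ m) := by
      funext s
      have hfac : ((m : ℕ)! : ℝ) ≠ 0 := by positivity
      field_simp
    rw [hrw, intervalIntegral.integral_const_mul]
    have hgpow := integral_g_pow hg τ0 η m
    rw [hgpow]
    have hval : C * ((A η / k0) ^ j / j !) / m ! * (B η ^ (m + 1) / (m + 1))
        = C * ((A η / k0) ^ j / j !) * (B η ^ (m + 1) / (m + 1)!) := by
      have hk0n : (k0 : ℝ) ≠ 0 := hk0.ne'
      rw [Nat.factorial_succ]
      push_cast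
      field_simp
      try exact Or.inl trivial
    rw [hval, abs_of_nonneg]
    have hBη0 : 0 ≤ B η := hB0 η hη hητ
    positivity

lemma sum_inv_factorial_mul (n : ℕ) :
    ∑ l ∈ Finset.range (n + 1), (1 : ℝ) / (l ! * (n - l)!) = 2 ^ n / n ! := by
  rw [eq_div_iff (by positivity : ((n : ℕ)! : ℝ) ≠ 0), Finset.sum_mul]
  have h : ∀ l ∈ Finset.range (n + 1),
      (1 : ℝ) / (l ! * (n - l)!) * n ! = (n.choose l : ℝ) := by
    intro l hl
    have hl' : l ≤ n := Nat.lt_succ_iff.1 (Finset.mem_range.1 hl)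
    have hcf := Nat.choose_mul_factorial_mul_factorial hl'
    have hfl : ((l : ℕ)! : ℝ) ≠ 0 := by positivity
    have hfnl : (((n - l : ℕ)) ! : ℝ) ≠ 0 := by positivity
    rw [Nat.cast_choose ℝ hl', div_mul_eq_mul_div, one_mul]
  rw [Finset.sum_congr rfl h, ← Nat.cast_sum, Nat.sum_range_choose]
  push_cast
  ring



lemma sum_le_two_mul (n : ℕ) (C a b : ℝ) (hC : 0 ≤ C) (ha : 0 ≤ a) (hb : 0 ≤ b)
    (hfac : (0:ℝ) < n !) :
    C ^ 2 * (a ^ 3 / 6) * b ^ n * (2 ^ n / n !)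
      + C * a * (b ^ n / n !) * (C * (a ^ 2 / 2))
      + C * (a ^ 2 / 2) * (b ^ n / n !) * (C * a)
      + C * (a ^ 3 / 6) * (b ^ n / n !) * C
      ≤ 2 * C ^ 2 * a ^ 3 * ((2 * b) ^ n / n !) := by
  have hX1 : (1:ℝ) ≤ 2 ^ n := one_le_pow₀ (by norm_num)
  have hT0 : 0 ≤ C ^ 2 * a ^ 3 * b ^ n / n ! := by positivity
  have e1 : C ^ 2 * (a ^ 3 / 6) * b ^ n * (2 ^ n / n !)
      + C * a * (b ^ n / n !) * (C * (a ^ 2 / 2))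
      + C * (a ^ 2 / 2) * (b ^ n / n !) * (C * a)
      + C * (a ^ 3 / 6) * (b ^ n / n !) * C
      = (C ^ 2 * a ^ 3 * b ^ n / n !) * (2 ^ n / 6 + 7 / 6) := by ring
  have e2 : 2 * C ^ 2 * a ^ 3 * ((2 * b) ^ n / n !)
      = (C ^ 2 * a ^ 3 * b ^ n / n !) * (2 * 2 ^ n) := by
    rw [mul_pow]; ring
  rw [e1, e2]
  have h3 : 0 ≤ (C ^ 2 * a ^ 3 * b ^ n / n !) * (2 ^ n - 1) :=
    mul_nonneg hT0 (by linarith)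
  nlinarith [hT0, h3]

lemma chi_pair_sum_bound {k0 τ0 τ : ℝ} {W : ℝ → ℝ} (hk0 : 0 < k0) (hW : Continuous W)
    (hτ0 : τ0 ≤ τ) (C A b a : ℝ) (hC : C = (Real.sqrt (2 * k0))⁻¹)
    (hA : A = ∫ s in τ0..τ, |W s|) (hb : b = ∫ s in τ0..τ, (τ - s) * |W s|)
    (ha : a = A / k0) (n : ℕ) :
    ∑ l ∈ Finset.range (n + 3 + 1), ‖chi k0 τ0 W l τ‖ * ‖chi k0 τ0 W (n + 3 - l) τ‖
      ≤ 2 * C ^ 2 * a ^ 3 * ((2 * b) ^ n / n !) := by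
  have hC0 : 0 ≤ C := hC ▸ inv_nonneg.2 (Real.sqrt_nonneg _)
  have hA0 : 0 ≤ A := hA ▸ intervalIntegral.integral_nonneg hτ0 fun s _ => abs_nonneg _
  have ha0 : 0 ≤ a := ha ▸ div_nonneg hA0 hk0.le
  have hb0 : 0 ≤ b := hb ▸ intervalIntegral.integral_nonneg hτ0 fun s hs =>
    mul_nonneg (by linarith [hs.2] : (0:ℝ) ≤ τ - s) (abs_nonneg _)
  have hP : ∀ j m : ℕ, ‖chi k0 τ0 W (j + m) τ‖ ≤ C * (a ^ j / j !) * (b ^ m / m !) := by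
    intro j m
    have h := chi_bound_AB (τ := τ) hk0 hW j m τ hτ0 le_rfl
    rw [← hA, ← hb, ← ha, ← hC] at h
    exact h
  have hQ0 : ‖chi k0 τ0 W 0 τ‖ ≤ C := by
    rw [hC]; exact (norm_chi_zero k0 τ0 W τ).le
  have hQ1 : ‖chi k0 τ0 W 1 τ‖ ≤ C * a := by
    have h := hP 1 0; norm_num [Nat.factorial] at h; exact h
  have hQ2 : ‖chi k0 τ0 W 2 τ‖ ≤ C * (a ^ 2 / 2) := by
    have h := hP 2 0; norm_num [Nat.factorial] at h; exact h
  have hQ0m : ∀ m : ℕ, ‖chi k0 τ0 W m τ‖ ≤ C * (b ^ m / m !) := by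
    intro m; have h := hP 0 m; norm_num at h; exact h
  have hQ1m : ∀ m : ℕ, ‖chi k0 τ0 W (1 + m) τ‖ ≤ C * a * (b ^ m / m !) := by
    intro m; have h := hP 1 m; norm_num [Nat.factorial] at h; exact h
  have hQ2m : ∀ m : ℕ, ‖chi k0 τ0 W (2 + m) τ‖ ≤ C * (a ^ 2 / 2) * (b ^ m / m !) := by
    intro m; have h := hP 2 m; norm_num [Nat.factorial] at h; exact h
  have hQ3m : ∀ m : ℕ, ‖chi k0 τ0 W (3 + m) τ‖ ≤ C * (a ^ 3 / 6) * (b ^ m / m !) := by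
    intro m; have h := hP 3 m; norm_num [Nat.factorial] at h; exact h
  set F : ℕ → ℝ := fun l => ‖chi k0 τ0 W l τ‖ * ‖chi k0 τ0 W (n + 3 - l) τ‖ with hF
  have hdecomp : ∑ l ∈ Finset.range (n + 3 + 1), F l
      = (∑ l ∈ Finset.range (n + 1), F l) + (F (n+1) + (F (n+2) + F (n+3))) := by
    have hset : Finset.range (n + 3 + 1)
        = Finset.range (n + 1) ∪ {n+1, n+2, n+3} := by
      ext x
      simp only [Finset.mem_range, Finset.mem_union, Finset.mem_insert,
        Finset.mem_singleton]
      omega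
    have hdisj : Disjoint (Finset.range (n + 1)) ({n+1, n+2, n+3} : Finset ℕ) := by
      simp only [Finset.disjoint_left, Finset.mem_range, Finset.mem_insert,
        Finset.mem_singleton]
      intro x hx
      omega
    rw [hset, Finset.sum_union hdisj]
    congr 1
    rw [Finset.sum_insert (by simp only [Finset.mem_insert, Finset.mem_singleton]; omega),
      Finset.sum_insert (by simp only [Finset.mem_singleton]; omega),
      Finset.sum_singleton]
  have hmid : ∑ l ∈ Finset.range (n + 1), F l
      ≤ C ^ 2 * (a ^ 3 / 6) * b ^ n * (2 ^ n / n !) := by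
    have hstep : ∀ l ∈ Finset.range (n + 1),
        F l ≤ C ^ 2 * (a ^ 3 / 6) * b ^ n * (1 / (l ! * (n - l)!)) := by
      intro l hl
      have hln : l ≤ n := Nat.lt_succ_iff.1 (Finset.mem_range.1 hl)
      have hidx : n + 3 - l = 3 + (n - l) := by omega
      have hprod : F l ≤ (C * (b ^ l / l !)) * (C * (a ^ 3 / 6) * (b ^ (n-l) / (n-l)!)) := by
        show ‖chi k0 τ0 W l τ‖ * ‖chi k0 τ0 W (n + 3 - l) τ‖ ≤ _
        rw [hidx]
        exact mul_le_mul (hQ0m l) (hQ3m (n - l)) (norm_nonneg _)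
          (mul_nonneg hC0 (div_nonneg (pow_nonneg hb0 l) (Nat.cast_nonneg _)))
      refine hprod.trans (le_of_eq ?_)
      have hbb : b ^ l * b ^ (n - l) = b ^ n := by
        rw [← pow_add]; congr 1; omega
      rw [← hbb]; ring
    calc ∑ l ∈ Finset.range (n + 1), F l
        ≤ ∑ l ∈ Finset.range (n + 1), C ^ 2 * (a ^ 3 / 6) * b ^ n * (1 / (l ! * (n - l)!)) :=
          Finset.sum_le_sum hstep
      _ = C ^ 2 * (a ^ 3 / 6) * b ^ n * (2 ^ n / n !) := by
          rw [← Finset.mul_sum, sum_inv_factorial_mul]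
  have hE1 : F (n+1) ≤ C * a * (b ^ n / n !) * (C * (a ^ 2 / 2)) := by
    show ‖chi k0 τ0 W (n+1) τ‖ * ‖chi k0 τ0 W (n + 3 - (n+1)) τ‖ ≤ _
    rw [show n + 3 - (n+1) = 2 from by omega, show n + 1 = 1 + n from by omega]
    exact mul_le_mul (hQ1m n) hQ2 (norm_nonneg _)
      (mul_nonneg (mul_nonneg hC0 ha0) (div_nonneg (pow_nonneg hb0 n) (Nat.cast_nonneg _)))
  have hE2 : F (n+2) ≤ C * (a ^ 2 / 2) * (b ^ n / n !) * (C * a) := by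
    show ‖chi k0 τ0 W (n+2) τ‖ * ‖chi k0 τ0 W (n + 3 - (n+2)) τ‖ ≤ _
    rw [show n + 3 - (n+2) = 1 from by omega, show n + 2 = 2 + n from by omega]
    exact mul_le_mul (hQ2m n) hQ1 (norm_nonneg _)
      (mul_nonneg (mul_nonneg hC0 (by positivity)) (div_nonneg (pow_nonneg hb0 n) (Nat.cast_nonneg _)))
  have hE3 : F (n+3) ≤ C * (a ^ 3 / 6) * (b ^ n / n !) * C := by
    show ‖chi k0 τ0 W (n+3) τ‖ * ‖chi k0 τ0 W (n + 3 - (n+3)) τ‖ ≤ _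
    rw [show n + 3 - (n+3) = 0 from by omega, show n + 3 = 3 + n from by omega]
    exact mul_le_mul (hQ3m n) hQ0 (norm_nonneg _)
      (mul_nonneg (mul_nonneg hC0 (by positivity)) (div_nonneg (pow_nonneg hb0 n) (Nat.cast_nonneg _)))
  have hkey := sum_le_two_mul n C a b hC0 ha0 hb0 (by positivity)
  rw [hdecomp]
  linarith [hmid, hE1, hE2, hE3, hkey]

/-- **Absolute convergence and bound for the higher-order terms** (eq. (16) of
Pinamonti–Siemssen): the double series `Σ_{n≥3} Σ_{l=0}^{n} χ^l conj(χ^{n−l})` converges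
absolutely and its sum `S(τ)` satisfies
`|S(τ)| ≤ (4/k₀⁴)(∫|V|)³ exp(2∫(τ−η)|V|)`. -/
theorem higher_order_bound (τ0 τ1 k0 : ℝ) (hτ : τ0 < τ1) (hk0 : 0 < k0)
    (V : ℝ → ℝ) (hV : ContinuousOn V (Set.Icc τ0 τ1)) :
    ∀ τ ∈ Set.Icc τ0 τ1,
      Summable (fun n : ℕ => ∑ l ∈ Finset.range (n + 3 + 1),
        ‖chi k0 τ0 V l τ * (starRingEnd ℂ) (chi k0 τ0 V (n + 3 - l) τ)‖) ∧
      ‖∑' n : ℕ, ∑ l ∈ Finset.range (n + 3 + 1),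
          chi k0 τ0 V l τ * (starRingEnd ℂ) (chi k0 τ0 V (n + 3 - l) τ)‖
        ≤ 4 / k0 ^ 4 * (∫ η in τ0..τ, |V η|) ^ 3 *
            Real.exp (2 * ∫ η in τ0..τ, (τ - η) * |V η|) := by
  intro τ hτmem
  obtain ⟨hτ0le, hτle1⟩ := hτmem
  have hτ01 : τ0 ≤ τ1 := hτ.le
  -- continuous extension of V
  set cl : ℝ → ℝ := fun s => max τ0 (min s τ1) with hcl
  have hclc : Continuous cl := continuous_const.max (continuous_id.min continuous_const)
  have hclmem : ∀ s, cl s ∈ Set.Icc τ0 τ1 := fun s =>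
    ⟨le_max_left _ _, max_le hτ01 (min_le_right _ _)⟩
  set W : ℝ → ℝ := fun s => V (cl s) with hWdef
  have hWcont : Continuous W := hV.comp_continuous hclc hclmem
  have hWeq : Set.EqOn V W (Set.Icc τ0 τ1) := by
    intro s hs
    have h1 : cl s = s := by
      rw [hcl]
      simp only [min_eq_left hs.2, max_eq_right hs.1]
    rw [hWdef]
    simp only [h1]
  have hτmem' : τ ∈ Set.Icc τ0 τ1 := ⟨hτ0le, hτle1⟩
  have hchieq : ∀ n : ℕ, chi k0 τ0 V n τ = chi k0 τ0 W n τ := fun n =>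
    chi_congr k0 τ0 τ1 hWeq n τ hτmem'
  -- the main quantities
  set C : ℝ := (Real.sqrt (2 * k0))⁻¹ with hC
  set A : ℝ := ∫ s in τ0..τ, |W s| with hA
  set b : ℝ := ∫ s in τ0..τ, (τ - s) * |W s| with hb
  set a : ℝ := A / k0 with ha
  have hC0 : 0 ≤ C := inv_nonneg.2 (Real.sqrt_nonneg _)
  have hA0 : 0 ≤ A := intervalIntegral.integral_nonneg hτ0le fun s _ => abs_nonneg _
  have ha0 : 0 ≤ a := div_nonneg hA0 hk0.le
  have hb0 : 0 ≤ b := intervalIntegral.integral_nonneg hτ0le fun s hs =>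
    mul_nonneg (by linarith [hs.2] : (0:ℝ) ≤ τ - s) (abs_nonneg _)
  have hterm : ∀ n : ℕ,
      ∑ l ∈ Finset.range (n + 3 + 1), ‖chi k0 τ0 W l τ‖ * ‖chi k0 τ0 W (n + 3 - l) τ‖
        ≤ 2 * C ^ 2 * a ^ 3 * ((2 * b) ^ n / n !) :=
    chi_pair_sum_bound hk0 hWcont hτ0le C A b a hC hA hb ha
  have hg : Summable (fun n : ℕ => 2 * C ^ 2 * a ^ 3 * ((2 * b) ^ n / n !)) :=
    (Real.summable_pow_div_factorial (2 * b)).mul_left (2 * C ^ 2 * a ^ 3)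
  have hfun : (fun n : ℕ => ∑ l ∈ Finset.range (n + 3 + 1),
        ‖chi k0 τ0 V l τ * (starRingEnd ℂ) (chi k0 τ0 V (n + 3 - l) τ)‖)
      = fun n : ℕ => ∑ l ∈ Finset.range (n + 3 + 1),
        ‖chi k0 τ0 W l τ‖ * ‖chi k0 τ0 W (n + 3 - l) τ‖ := by
    funext n
    refine Finset.sum_congr rfl fun l _ => ?_
    rw [hchieq l, hchieq (n + 3 - l), norm_mul, RCLike.norm_conj]
  have hsum1 : Summable (fun n : ℕ => ∑ l ∈ Finset.range (n + 3 + 1),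
      ‖chi k0 τ0 V l τ * (starRingEnd ℂ) (chi k0 τ0 V (n + 3 - l) τ)‖) := by
    rw [hfun]
    exact Summable.of_nonneg_of_le
      (fun n => Finset.sum_nonneg fun l _ => mul_nonneg (norm_nonneg _) (norm_nonneg _))
      hterm hg
  refine ⟨hsum1, ?_⟩
  have hnormle : ∀ n : ℕ,
      ‖∑ l ∈ Finset.range (n + 3 + 1),
          chi k0 τ0 V l τ * (starRingEnd ℂ) (chi k0 τ0 V (n + 3 - l) τ)‖
        ≤ 2 * C ^ 2 * a ^ 3 * ((2 * b) ^ n / n !) := by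
    intro n
    refine (norm_sum_le _ _).trans ?_
    calc ∑ l ∈ Finset.range (n + 3 + 1),
          ‖chi k0 τ0 V l τ * (starRingEnd ℂ) (chi k0 τ0 V (n + 3 - l) τ)‖
        = ∑ l ∈ Finset.range (n + 3 + 1),
            ‖chi k0 τ0 W l τ‖ * ‖chi k0 τ0 W (n + 3 - l) τ‖ := congrFun hfun n
      _ ≤ 2 * C ^ 2 * a ^ 3 * ((2 * b) ^ n / n !) := hterm n
  have hexp : ∑' n : ℕ, (2 * b) ^ n / (n ! : ℝ) = Real.exp (2 * b) := by
    rw [Real.exp_eq_exp_ℝ]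
    exact (congrFun NormedSpace.exp_eq_tsum_div (2 * b)).symm
  have hAV : (∫ η in τ0..τ, |V η|) = A := by
    rw [hA]
    apply intervalIntegral.integral_congr
    intro s hs
    rw [Set.uIcc_of_le hτ0le] at hs
    show |V s| = |W s|
    rw [hWeq ⟨hs.1, le_trans hs.2 hτle1⟩]
  have hbV : (∫ η in τ0..τ, (τ - η) * |V η|) = b := by
    rw [hb]
    apply intervalIntegral.integral_congr
    intro s hs
    rw [Set.uIcc_of_le hτ0le] at hs
    show (τ - s) * |V s| = (τ - s) * |W s|
    rw [hWeq ⟨hs.1, le_trans hs.2 hτle1⟩]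
  calc ‖∑' n : ℕ, ∑ l ∈ Finset.range (n + 3 + 1),
          chi k0 τ0 V l τ * (starRingEnd ℂ) (chi k0 τ0 V (n + 3 - l) τ)‖
      ≤ ∑' n : ℕ, 2 * C ^ 2 * a ^ 3 * ((2 * b) ^ n / n !) :=
        tsum_of_norm_bounded hg.hasSum hnormle
    _ = 2 * C ^ 2 * a ^ 3 * Real.exp (2 * b) := by
        rw [tsum_mul_left, hexp]
    _ ≤ 4 / k0 ^ 4 * A ^ 3 * Real.exp (2 * b) := by
        have hCsq : C ^ 2 = (2 * k0)⁻¹ := by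
          rw [hC, inv_pow, Real.sq_sqrt (by linarith : (0:ℝ) ≤ 2 * k0)]
        have heq : 2 * C ^ 2 * a ^ 3 = A ^ 3 / k0 ^ 4 := by
          rw [hCsq, ha]
          have hk0n : (k0:ℝ) ≠ 0 := hk0.ne'
          field_simp
        rw [heq]
        apply mul_le_mul_of_nonneg_right _ (Real.exp_pos _).le
        rw [div_eq_mul_inv, div_eq_mul_inv]
        nlinarith [pow_nonneg hA0 3, inv_nonneg.2 (pow_nonneg hk0.le 4),
          mul_nonneg (pow_nonneg hA0 3) (inv_nonneg.2 (pow_nonneg hk0.le 4))]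
    _ = 4 / k0 ^ 4 * (∫ η in τ0..τ, |V η|) ^ 3 *
          Real.exp (2 * ∫ η in τ0..τ, (τ - η) * |V η|) := by
        rw [hAV, hbV]

end Modes
end
end

section
/- For every real x > 0, the complex integral ∫₀¹ ( i x − ln(1 − s) )^{-1} ds exists and its modulus satisfies | ∫₀¹ ( i x − ln(1 − s) )^{-1} ds | ≤ ln( (1 + √(1 + x²)) / x ). -/
open MeasureTheory Filter Set Topology

/-- **Bound on the exponential integral along the imaginary axis** (Pinamonti–Siemssen,
proof of Proposition 2.1): for real `x > 0` the integral `∫₀¹ (ix − ln(1−s))⁻¹ ds` exists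
and `|∫₀¹ (ix − ln(1−s))⁻¹ ds| ≤ ln((1 + √(1+x²))/x)`. -/
theorem exponential_integral_bound (x : ℝ) (hx : 0 < x) :
    IntervalIntegrable
        (fun s : ℝ => (Complex.I * (x : ℂ) - ((Real.log (1 - s) : ℝ) : ℂ))⁻¹)
        MeasureTheory.volume 0 1 ∧
      ‖∫ s in (0:ℝ)..1, (Complex.I * (x : ℂ) - ((Real.log (1 - s) : ℝ) : ℂ))⁻¹‖
        ≤ Real.log ((1 + Real.sqrt (1 + x ^ 2)) / x) := by
  set f : ℝ → ℂ := fun s => (Complex.I * (x:ℂ) - ((Real.log (1-s) : ℝ) : ℂ))⁻¹ with hf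
  set g : ℝ → ℝ := fun s => (Real.sqrt (x^2 + s^2))⁻¹ with hgdef
  have hx2 : ∀ s : ℝ, 0 < x^2 + s^2 := fun s => by positivity
  -- norm of f
  have hnorm : ∀ s : ℝ, ‖f s‖ = (Real.sqrt (x^2 + (Real.log (1-s))^2))⁻¹ := by
    intro s
    rw [hf]
    simp only [norm_inv]
    congr 1
    rw [Complex.norm_def, Complex.normSq_apply]
    simp
    ring_nf
  -- g continuous hence interval integrable
  have hgc : Continuous g := by
    rw [hgdef]
    exact (continuous_const.add (continuous_id.pow 2)).sqrt.inv₀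
      (fun s => (Real.sqrt_pos.2 (hx2 s)).ne')
  have hgint : IntervalIntegrable g volume 0 1 := hgc.intervalIntegrable 0 1
  -- f measurable
  have hfm : AEStronglyMeasurable f (volume.restrict (Set.uIoc (0:ℝ) 1)) := by
    apply Measurable.aestronglyMeasurable
    rw [hf]
    exact ((Complex.measurable_ofReal.comp
      (Real.measurable_log.comp (measurable_const.sub measurable_id))).const_sub _).inv
  -- a.e. pointwise bound on Ι 0 1
  have hbound : ∀ᵐ s ∂(volume.restrict (Set.uIoc (0:ℝ) 1)), ‖f s‖ ≤ g s := by
    have h1 : ∀ᵐ s : ℝ ∂volume, s ≠ 1 := by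
      refine ae_iff.2 ?_
      simp only [ne_eq, not_not, Set.setOf_eq_eq_singleton]
      exact Real.volume_singleton
    have h2 : ∀ᵐ s ∂(volume.restrict (Set.uIoc (0:ℝ) 1)), s ∈ Set.uIoc (0:ℝ) 1 :=
      ae_restrict_mem measurableSet_uIoc
    filter_upwards [ae_restrict_of_ae h1, h2] with s hs1 hs2
    rw [hnorm, hgdef]
    have hs01 : 0 < s ∧ s ≤ 1 := by
      rw [uIoc_of_le (by norm_num : (0:ℝ) ≤ 1)] at hs2; exact hs2
    have hslt : s < 1 := lt_of_le_of_ne hs01.2 hs1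
    have hlog : Real.log (1 - s) ≤ -s := by
      have := Real.log_le_sub_one_of_pos (by linarith : (0:ℝ) < 1 - s)
      linarith
    have hsq : s^2 ≤ (Real.log (1-s))^2 := by nlinarith [hs01.1]
    exact inv_anti₀ (Real.sqrt_pos.2 (hx2 s))
      (Real.sqrt_le_sqrt (by linarith))
  have hfint : IntervalIntegrable f volume 0 1 :=
    hgint.mono_fun' hfm hbound
  refine ⟨hfint, ?_⟩
  -- compute integral of g
  have hF : ∀ s : ℝ, HasDerivAt (fun t => Real.arsinh (t / x)) (g s) s := by
    intro s
    have h1 : HasDerivAt (fun t : ℝ => t / x) (1 / x) s := (hasDerivAt_id s).div_const x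
    have h2 : HasDerivAt (fun t => Real.arsinh (t / x))
        ((Real.sqrt (1 + (s / x) ^ 2))⁻¹ * (1 / x)) s := (Real.hasDerivAt_arsinh (s / x)).comp (h₂ := Real.arsinh) s h1
    have key : Real.sqrt (1 + (s/x)^2) * x = Real.sqrt (x^2 + s^2) := by
      nth_rewrite 2 [← Real.sqrt_sq hx.le]
      rw [← Real.sqrt_mul (by positivity)]
      congr 1
      field_simp
    convert h2 using 1
    show (Real.sqrt (x^2 + s^2))⁻¹ = _
    rw [← key, mul_inv]
    simp [one_div]
  have hInt : ∫ s in (0:ℝ)..1, g s = Real.arsinh (1 / x) := by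
    rw [intervalIntegral.integral_eq_sub_of_hasDerivAt (fun s _ => hF s) hgint]
    simp
  have hval : Real.arsinh (1 / x) = Real.log ((1 + Real.sqrt (1 + x ^ 2)) / x) := by
    rw [Real.arsinh]
    congr 1
    have h3 : Real.sqrt (1 + (1/x)^2) = Real.sqrt (1 + x^2) / x := by
      rw [show (1 : ℝ) + (1/x)^2 = (1+x^2)/x^2 by field_simp; ring,
        Real.sqrt_div (by positivity), Real.sqrt_sq hx.le]
    rw [h3]
    field_simp
  calc ‖∫ s in (0:ℝ)..1, f s‖ ≤ |∫ s in (0:ℝ)..1, g s| :=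
        intervalIntegral.norm_integral_le_abs_of_norm_le hbound hgint
    _ = Real.arsinh (1/x) := by
        rw [hInt]; exact abs_of_nonneg (Real.arsinh_nonneg_iff.2 (by positivity))
    _ = _ := hval
end

section
/- Let x be a complex number with Re x ≥ 0 and x ≠ 0. Then the improper integral ∫₁^∞ t^{-1} e^{-x t} dt converges (as the limit of ∫₁^T for T → ∞) and equals ∫₀¹ e^{-x} ( x − ln(1 − s) )^{-1} ds, where ln denotes the real natural logarithm of the real number 1 − s ∈ (0,1]. In particular, both expressions equal the exponential integral E₁(x). -/
open MeasureTheory Filter Set Topology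

lemma aux_norm_le (x : ℂ) (hre : 0 ≤ x.re) {u : ℝ} (hu : 0 ≤ u) : ‖x‖ ≤ ‖x + u‖ := by
  rw [Complex.norm_def, Complex.norm_def]
  apply Real.sqrt_le_sqrt
  simp only [Complex.normSq_apply, Complex.add_re, Complex.add_im, Complex.ofReal_re,
    Complex.ofReal_im, add_zero]
  nlinarith

lemma aux_ne (x : ℂ) (hre : 0 ≤ x.re) (hx : x ≠ 0) {u : ℝ} (hu : 0 ≤ u) : x + u ≠ 0 := by
  intro h
  have := aux_norm_le x hre hu
  rw [h, norm_zero] at this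
  exact hx (norm_le_zero_iff.mp this)

lemma aux_int_v_exp {t : ℝ} (ht : 0 < t) :
    ∫ v in Ioi (0:ℝ), v * Real.exp (-(t*v)) = (t^2)⁻¹ := by
  have h0 : (∫ w in Ioi (0:ℝ), Real.exp (-w) * w ^ ((2:ℝ)-1)) = 1 := by
    rw [← Real.Gamma_eq_integral (by norm_num : (0:ℝ) < 2)]; exact Real.Gamma_two
  have h0' : (∫ w in Ioi (0:ℝ), w * Real.exp (-w)) = 1 := by
    rw [← h0]
    apply setIntegral_congr_fun measurableSet_Ioi
    intro w hw
    simp only []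
    rw [show ((2:ℝ)-1) = 1 by norm_num, Real.rpow_one]; ring
  have h1 := integral_comp_mul_left_Ioi (fun w => w * Real.exp (-w)) 0 ht
  simp only [mul_zero, smul_eq_mul, h0', mul_one] at h1
  have h2 : (∫ v in Ioi (0:ℝ), t * v * Real.exp (-(t*v))) =
      t * ∫ v in Ioi (0:ℝ), v * Real.exp (-(t*v)) := by
    rw [← MeasureTheory.integral_const_mul]
    congr 1; ext v; ring
  rw [h2] at h1
  field_simp at h1 ⊢
  nlinarith [h1]

lemma aux_cexp_deriv (c : ℂ) (t : ℝ) :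
    HasDerivAt (fun t : ℝ => Complex.exp (-(c*t))) (-c * Complex.exp (-(c*t))) t := by
  have h1 : HasDerivAt (fun z : ℂ => Complex.exp (-(c*z))) (-c * Complex.exp (-(c*(t:ℂ)))) (t:ℂ) := by
    have := (Complex.hasDerivAt_exp (-(c*(t:ℂ)))).comp (t:ℂ)
      (((hasDerivAt_id (t:ℂ)).const_mul c).neg)
    simpa [mul_comm, Function.comp_def, Pi.neg_def] using this
  exact h1.comp_ofReal

lemma aux_cexp_mble (c : ℂ) :
    AEStronglyMeasurable (fun t : ℝ => Complex.exp (-(c*t))) (volume.restrict (Ioi (1:ℝ))) :=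
  (Complex.continuous_exp.comp (continuous_const.mul Complex.continuous_ofReal).neg).aestronglyMeasurable

lemma aux_cexp_integrableOn {c : ℂ} (hc : 0 < c.re) (a : ℝ) :
    IntegrableOn (fun t : ℝ => Complex.exp (-(c*t))) (Ioi a) := by
  have hg : IntegrableOn (fun t : ℝ => Real.exp (-(c.re * t))) (Ioi a) :=
    by simpa [neg_mul] using exp_neg_integrableOn_Ioi a hc
  have hm : AEStronglyMeasurable (fun t : ℝ => Complex.exp (-(c*t)))
      (volume.restrict (Ioi a)) :=
    (Complex.continuous_exp.comp
      (continuous_const.mul Complex.continuous_ofReal).neg).aestronglyMeasurable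
  have hb : ∀ᵐ (t:ℝ) ∂(volume.restrict (Ioi a)), ‖Complex.exp (-(c*t))‖ ≤ Real.exp (-(c.re * t)) := by
    filter_upwards with t
    simp [Complex.norm_exp, Complex.mul_re]
  exact MeasureTheory.Integrable.mono' hg hm hb

lemma aux_exp_re_tendsto {c : ℂ} (hc : 0 < c.re) :
    Tendsto (fun t : ℝ => Real.exp (-(c.re * t))) atTop (𝓝 0) := by
  apply Real.tendsto_exp_atBot.comp
  exact (tendsto_neg_atBot_iff.mpr (Tendsto.const_mul_atTop hc tendsto_id))

lemma aux_cexp_integral {c : ℂ} (hc : 0 < c.re) (a : ℝ) :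
    ∫ t in Ioi a, Complex.exp (-(c*t)) = Complex.exp (-(c*a)) / c := by
  have hc0 : c ≠ 0 := by intro h; rw [h] at hc; simp at hc
  have hderiv : ∀ t ∈ Ici a, HasDerivAt (fun t : ℝ => -c⁻¹ * Complex.exp (-(c*t)))
      (Complex.exp (-(c*t))) t := by
    intro t _
    have h := (aux_cexp_deriv c t).const_mul (-c⁻¹)
    refine h.congr_deriv ?_
    linear_combination (Complex.exp (-(c*t))) * inv_mul_cancel₀ hc0
  have hb : Tendsto (fun t : ℝ => ‖c⁻¹‖ * Real.exp (-(c.re * t))) atTop (𝓝 0) := by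
    simpa using (aux_exp_re_tendsto hc).const_mul ‖c⁻¹‖
  have htends : Tendsto (fun t : ℝ => -c⁻¹ * Complex.exp (-(c*t))) atTop (𝓝 0) := by
    apply squeeze_zero_norm _ hb
    intro t
    simp [Complex.norm_exp, Complex.mul_re]
  have h := integral_Ioi_of_hasDerivAt_of_tendsto' hderiv (aux_cexp_integrableOn hc a) htends
  rw [h]
  field_simp
  ring

lemma aux_integral_ofReal {μ : Measure ℝ} {f : ℝ → ℝ} :
    ∫ x, ((f x : ℝ) : ℂ) ∂μ = ((∫ x, f x ∂μ : ℝ) : ℂ) := integral_ofReal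

lemma aux_gamma2 : IntegrableOn (fun v : ℝ => v * Real.exp (-v)) (Ioi 0) := by
  have h := Real.GammaIntegral_convergent (by norm_num : (0:ℝ) < 2)
  apply h.congr_fun ?_ measurableSet_Ioi
  intro v hv
  simp only [show ((2:ℝ)-1) = (1:ℝ) by norm_num, Real.rpow_one]; ring

-- norm of the product integrand
lemma aux_norm_f (x : ℂ) (t v : ℝ) (hv : 0 ≤ v) :
    ‖(v:ℂ) * Complex.exp (-((x+v)*t))‖ = v * Real.exp (-((x.re+v)*t)) := by
  simp [map_mul, Complex.norm_exp, Complex.norm_real, Complex.mul_re,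
    Complex.add_re, Complex.ofReal_re, Complex.add_im, Complex.ofReal_im, abs_of_nonneg hv]

lemma aux_prod_integrable (x : ℂ) (hre : 0 ≤ x.re) :
    Integrable (Function.uncurry fun (t v : ℝ) => (v:ℂ) * Complex.exp (-((x+v)*t)))
      ((volume.restrict (Ioi (1:ℝ))).prod (volume.restrict (Ioi (0:ℝ)))) := by
  have hmeas : AEStronglyMeasurable
      (Function.uncurry fun (t v : ℝ) => (v:ℂ) * Complex.exp (-((x+v)*t)))
      ((volume.restrict (Ioi (1:ℝ))).prod (volume.restrict (Ioi (0:ℝ)))) := by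
    apply Continuous.aestronglyMeasurable
    fun_prop
  rw [integrable_prod_iff hmeas]
  constructor
  · filter_upwards [ae_restrict_mem measurableSet_Ioi] with t ht
    -- integrable in v for fixed t > 1
    apply MeasureTheory.Integrable.mono' aux_gamma2
    · apply Continuous.aestronglyMeasurable; fun_prop
    · filter_upwards [ae_restrict_mem measurableSet_Ioi] with v hv
      simp only [Function.uncurry_apply_pair]
      rw [aux_norm_f x t v (le_of_lt hv)]
      have h1 : v ≤ (x.re + v) * t := by nlinarith [mem_Ioi.mp ht, mem_Ioi.mp hv]
      have := Real.exp_le_exp.mpr (neg_le_neg h1)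
      nlinarith [mem_Ioi.mp hv, Real.exp_pos (-((x.re+v)*t)), Real.exp_pos (-v)]
  · -- integrable of t ↦ ∫ v, ‖f t v‖
    have hval : ∀ t ∈ Ioi (1:ℝ),
        (∫ v in Ioi (0:ℝ), ‖(v:ℂ) * Complex.exp (-((x+v)*t))‖) =
          Real.exp (-(x.re * t)) * (t^2)⁻¹ := by
      intro t ht
      have ht0 : 0 < t := lt_trans one_pos (mem_Ioi.mp ht)
      rw [← aux_int_v_exp ht0, ← integral_const_mul]
      apply setIntegral_congr_fun measurableSet_Ioi
      intro v hv
      show ‖(v:ℂ) * Complex.exp (-((x+v)*t))‖ = Real.exp (-(x.re*t)) * (v * Real.exp (-(t*v)))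
      rw [aux_norm_f x t v (le_of_lt (mem_Ioi.mp hv))]
      rw [show -((x.re + v) * t) = -(x.re * t) + -(t * v) by ring, Real.exp_add]
      ring
    have hint : IntegrableOn (fun t : ℝ => Real.exp (-(x.re * t)) * (t^2)⁻¹) (Ioi 1) := by
      have hrp : IntegrableOn (fun t : ℝ => t ^ (-2:ℝ)) (Ioi 1) :=
        integrableOn_Ioi_rpow_of_lt (by norm_num) one_pos
      apply MeasureTheory.Integrable.mono' hrp
      · apply ContinuousOn.aestronglyMeasurable ?_ measurableSet_Ioi
        apply ContinuousOn.mul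
        · fun_prop
        · apply ContinuousOn.inv₀ (by fun_prop)
          intro t ht
          have : (0:ℝ) < t := lt_trans one_pos (mem_Ioi.mp ht)
          positivity
      · filter_upwards [ae_restrict_mem measurableSet_Ioi] with t ht
        have ht1 : (1:ℝ) < t := mem_Ioi.mp ht
        have ht0 : (0:ℝ) < t := lt_trans one_pos ht1
        have h2 : t ^ (-2:ℝ) = (t^2)⁻¹ := by
          rw [Real.rpow_neg ht0.le]
          norm_num [Real.rpow_natCast]
        rw [h2, norm_mul, norm_inv]
        have he : Real.exp (-(x.re * t)) ≤ 1 := by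
          apply Real.exp_le_one_iff.mpr; nlinarith
        have hp : (0:ℝ) < (t^2)⁻¹ := by positivity
        calc ‖Real.exp (-(x.re*t))‖ * ‖t^2‖⁻¹ = Real.exp (-(x.re*t)) * (t^2)⁻¹ := by
              rw [Real.norm_eq_abs, Real.norm_eq_abs, abs_of_pos (Real.exp_pos _),
                abs_of_pos (by positivity)]
          _ ≤ 1 * (t^2)⁻¹ := by apply mul_le_mul_of_nonneg_right he hp.le
          _ = (t^2)⁻¹ := one_mul _
    apply hint.congr
    filter_upwards [ae_restrict_mem measurableSet_Ioi] with t ht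
    exact (hval t ht).symm

-- integrability of A-integrand
lemma aux_A_integrable (x : ℂ) (hre : 0 ≤ x.re) (hx : x ≠ 0) :
    IntegrableOn (fun u : ℝ => (Real.exp (-u) : ℂ) * (x + u)⁻¹) (Ioi 0) := by
  have hg : IntegrableOn (fun u : ℝ => Real.exp (-u) * ‖x‖⁻¹) (Ioi 0) := by
    apply Integrable.mul_const
    simpa [neg_mul, one_mul, IntegrableOn] using exp_neg_integrableOn_Ioi (0:ℝ) one_pos
  apply MeasureTheory.Integrable.mono' hg
  · apply ContinuousOn.aestronglyMeasurable ?_ measurableSet_Ioi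
    apply ContinuousOn.mul (by fun_prop)
    apply ContinuousOn.inv₀ (by fun_prop)
    exact fun u hu => aux_ne x hre hx (le_of_lt (mem_Ioi.mp hu))
  · filter_upwards [ae_restrict_mem measurableSet_Ioi] with u hu
    have hu0 : (0:ℝ) ≤ u := le_of_lt (mem_Ioi.mp hu)
    rw [norm_mul, norm_inv]
    have h1 : ‖((Real.exp (-u)):ℂ)‖ = Real.exp (-u) := by
      rw [Complex.norm_real, Real.norm_eq_abs, abs_of_pos (Real.exp_pos _)]
    rw [h1]
    apply mul_le_mul_of_nonneg_left _ (Real.exp_pos _).le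
    apply inv_anti₀ (by simpa using hx) (aux_norm_le x hre hu0)

-- integrability of D-integrand
lemma aux_D_integrable (x : ℂ) (hre : 0 ≤ x.re) (hx : x ≠ 0) :
    IntegrableOn (fun v : ℝ => (v:ℂ) * Complex.exp (-(x+v)) * (x + v)⁻¹) (Ioi 0) := by
  have hg : IntegrableOn (fun v : ℝ => v * Real.exp (-v) * ‖x‖⁻¹) (Ioi 0) :=
    aux_gamma2.mul_const _
  apply MeasureTheory.Integrable.mono' hg
  · apply ContinuousOn.aestronglyMeasurable ?_ measurableSet_Ioi
    apply ContinuousOn.mul (ContinuousOn.mul (by fun_prop) (by fun_prop))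
    apply ContinuousOn.inv₀ (by fun_prop)
    exact fun u hu => aux_ne x hre hx (le_of_lt (mem_Ioi.mp hu))
  · filter_upwards [ae_restrict_mem measurableSet_Ioi] with v hv
    have hv0 : (0:ℝ) ≤ v := le_of_lt (mem_Ioi.mp hv)
    rw [norm_mul, norm_mul, norm_inv]
    have h1 : ‖((v:ℝ):ℂ)‖ = v := by simp [abs_of_nonneg hv0]
    have h2 : ‖Complex.exp (-(x+v))‖ ≤ Real.exp (-v) := by
      rw [Complex.norm_exp]
      apply Real.exp_le_exp.mpr
      simp only [Complex.neg_re, Complex.add_re, Complex.ofReal_re]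
      linarith
    have h3 : ‖x + (v:ℂ)‖⁻¹ ≤ ‖x‖⁻¹ :=
      inv_anti₀ (by simpa using hx) (aux_norm_le x hre hv0)
    rw [h1]
    have : v * ‖Complex.exp (-(x+v))‖ * ‖x+(v:ℂ)‖⁻¹ ≤ v * Real.exp (-v) * ‖x‖⁻¹ := by
      apply mul_le_mul (mul_le_mul_of_nonneg_left h2 hv0) h3 (by positivity) (by positivity)
    exact this

-- the key Fubini computation
lemma aux_C (x : ℂ) (hre : 0 ≤ x.re) (hx : x ≠ 0) :
    ∫ t in Ioi (1:ℝ), ((t:ℂ)^2)⁻¹ * Complex.exp (-(x*t)) =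
      Complex.exp (-x) * (1 - x * ∫ u in Ioi (0:ℝ), (Real.exp (-u) : ℂ) * (x + u)⁻¹) := by
  set A : ℂ := ∫ u in Ioi (0:ℝ), (Real.exp (-u) : ℂ) * (x + u)⁻¹ with hA
  -- step 1: rewrite integrand as inner integral over v
  have step1 : ∀ t ∈ Ioi (1:ℝ), ((t:ℂ)^2)⁻¹ * Complex.exp (-(x*t)) =
      ∫ v in Ioi (0:ℝ), (v:ℂ) * Complex.exp (-((x+v)*t)) := by
    intro t ht
    have ht0 : (0:ℝ) < t := lt_trans one_pos (mem_Ioi.mp ht)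
    have e1 : ∀ v : ℝ, (v:ℂ) * Complex.exp (-((x+v)*t)) =
        Complex.exp (-(x*t)) * ((v * Real.exp (-(t*v)) : ℝ) : ℂ) := by
      intro v
      rw [show -((x+v)*t) = -(x*t) + -((t:ℂ)*v) by push_cast; ring, Complex.exp_add,
        Complex.ofReal_mul, Complex.ofReal_exp, Complex.ofReal_neg, Complex.ofReal_mul]
      ring
    rw [show (∫ v in Ioi (0:ℝ), (v:ℂ) * Complex.exp (-((x+v)*t))) =
        ∫ v in Ioi (0:ℝ), Complex.exp (-(x*t)) * ((v * Real.exp (-(t*v)) : ℝ) : ℂ) from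
      setIntegral_congr_fun measurableSet_Ioi (fun v _ => e1 v)]
    rw [integral_const_mul, aux_integral_ofReal, aux_int_v_exp ht0]
    push_cast
    ring
  rw [setIntegral_congr_fun measurableSet_Ioi step1]
  -- step 2: swap
  rw [integral_integral_swap (aux_prod_integrable x hre)]
  -- step 3: inner t-integral
  have step3 : ∀ v ∈ Ioi (0:ℝ), (∫ t in Ioi (1:ℝ), (v:ℂ) * Complex.exp (-((x+v)*t))) =
      Complex.exp (-x) * ((v:ℂ) * Complex.exp (-(v:ℂ)) * (x+v)⁻¹) := by
    intro v hv
    have hcre : 0 < (x + (v:ℂ)).re := by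
      simp only [Complex.add_re, Complex.ofReal_re]
      have := mem_Ioi.mp hv; linarith
    rw [integral_const_mul, aux_cexp_integral hcre 1]
    rw [show -((x+(v:ℂ))*(1:ℝ)) = -x + -(v:ℂ) by push_cast; ring, Complex.exp_add]
    field_simp
  rw [setIntegral_congr_fun measurableSet_Ioi step3, integral_const_mul]
  -- step 4: D = 1 - x * A
  have e2 : ∀ v ∈ Ioi (0:ℝ), (v:ℂ) * Complex.exp (-(v:ℂ)) * (x+v)⁻¹ =
      ((Real.exp (-v) : ℝ):ℂ) - x * ((Real.exp (-v) : ℝ):ℂ) * (x+v)⁻¹ := by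
    intro v hv
    have hne := aux_ne x hre hx (le_of_lt (mem_Ioi.mp hv))
    rw [← Complex.ofReal_neg, Complex.ofReal_exp]
    field_simp
    ring
  rw [setIntegral_congr_fun measurableSet_Ioi e2]
  have hxA_int : IntegrableOn (fun v : ℝ => x * ((Real.exp (-v):ℝ):ℂ) * (x+v)⁻¹) (Ioi 0) := by
    have h := (aux_A_integrable x hre hx).const_mul x
    apply IntegrableOn.congr_fun h ?_ measurableSet_Ioi
    intro v hv
    show x * (((Real.exp (-v):ℝ):ℂ) * (x+v)⁻¹) = x * ((Real.exp (-v):ℝ):ℂ) * (x+v)⁻¹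
    ring
  have hexp_int : IntegrableOn (fun v : ℝ => ((Real.exp (-v):ℝ):ℂ)) (Ioi 0) := by
    have : IntegrableOn (fun v : ℝ => Real.exp (-v)) (Ioi 0) := by
      simpa [neg_mul, one_mul] using exp_neg_integrableOn_Ioi (0:ℝ) one_pos
    exact this.ofReal
  rw [integral_sub hexp_int hxA_int]
  have h5 : (∫ v in Ioi (0:ℝ), ((Real.exp (-v):ℝ):ℂ)) = 1 := by
    rw [aux_integral_ofReal]
    rw [integral_exp_neg_Ioi_zero]; norm_num
  have h6 : (∫ v in Ioi (0:ℝ), x * ((Real.exp (-v):ℝ):ℂ) * (x+v)⁻¹) = x * A := by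
    rw [hA, ← integral_const_mul]
    apply setIntegral_congr_fun measurableSet_Ioi
    intro v hv
    show x * ((Real.exp (-v):ℝ):ℂ) * (x+v)⁻¹ = x * (((Real.exp (-v):ℝ):ℂ) * (x+v)⁻¹)
    ring
  rw [h5, h6]

lemma aux_image : Ioo (0:ℝ) 1 = (fun u : ℝ => 1 - Real.exp (-u)) '' Ioi 0 := by
  ext s
  constructor
  · rintro ⟨hs0, hs1⟩
    refine ⟨-Real.log (1 - s), ?_, ?_⟩
    · simp only [mem_Ioi]
      have := Real.log_neg (show (0:ℝ) < 1 - s by linarith) (by linarith)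
      linarith
    · show 1 - Real.exp (-(-Real.log (1-s))) = s
      rw [neg_neg, Real.exp_log (by linarith)]; ring
  · rintro ⟨u, hu, rfl⟩
    have hu0 : 0 < u := mem_Ioi.mp hu
    have h1 : Real.exp (-u) < 1 := Real.exp_lt_one_iff.mpr (by linarith)
    have h2 : 0 < Real.exp (-u) := Real.exp_pos _
    constructor
    · show 0 < 1 - Real.exp (-u); linarith
    · show 1 - Real.exp (-u) < 1; linarith

lemma aux_subst (x : ℂ) (hre : 0 ≤ x.re) (hx : x ≠ 0) :
    ∫ s in (0:ℝ)..1, Complex.exp (-x) * (x - ((Real.log (1 - s) : ℝ) : ℂ))⁻¹ =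
      Complex.exp (-x) * ∫ u in Ioi (0:ℝ), (Real.exp (-u) : ℂ) * (x + u)⁻¹ := by
  rw [intervalIntegral.integral_of_le zero_le_one, integral_Ioc_eq_integral_Ioo, aux_image]
  have hderiv : ∀ u ∈ Ioi (0:ℝ), HasDerivWithinAt (fun u : ℝ => 1 - Real.exp (-u))
      (Real.exp (-u)) (Ioi 0) u := by
    intro u _
    have h := ((Real.hasDerivAt_exp (-u)).comp u (hasDerivAt_neg u)).const_sub 1
    simpa using h.hasDerivWithinAt
  have hinj : InjOn (fun u : ℝ => 1 - Real.exp (-u)) (Ioi 0) := by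
    intro a _ b _ h
    simp only [sub_right_inj] at h
    have := Real.exp_injective (h)
    linarith [neg_injective this]
  rw [integral_image_eq_integral_abs_deriv_smul measurableSet_Ioi hderiv hinj]
  rw [← integral_const_mul]
  apply setIntegral_congr_fun measurableSet_Ioi
  intro u hu
  have h1 : (1:ℝ) - (1 - Real.exp (-u)) = Real.exp (-u) := by ring
  show |Real.exp (-u)| • (Complex.exp (-x) * (x - ((Real.log (1 - (1 - Real.exp (-u))) : ℝ) : ℂ))⁻¹)
      = Complex.exp (-x) * (((Real.exp (-u) : ℝ) : ℂ) * (x + u)⁻¹)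
  rw [h1, Real.log_exp, abs_of_pos (Real.exp_pos _)]
  rw [Complex.real_smul]
  push_cast
  ring_nf

lemma aux_intervalIntegrable (x : ℂ) (hre : 0 ≤ x.re) (hx : x ≠ 0) :
    IntervalIntegrable
        (fun s : ℝ => Complex.exp (-x) * (x - ((Real.log (1 - s) : ℝ) : ℂ))⁻¹)
        MeasureTheory.volume 0 1 := by
  rw [intervalIntegrable_iff, uIoc_of_le zero_le_one]
  apply Measure.integrableOn_of_bounded (M := Real.exp (-x.re) * ‖x‖⁻¹)
  · exact (measure_Ioc_lt_top).ne
  · apply Measurable.aestronglyMeasurable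
    apply Measurable.const_mul
    apply Measurable.inv
    exact (measurable_const.sub
      (Complex.measurable_ofReal.comp (Real.measurable_log.comp (measurable_const.sub measurable_id))))
  · filter_upwards [ae_restrict_mem measurableSet_Ioc] with s hs
    obtain ⟨hs0, hs1⟩ := hs
    have hlog : Real.log (1 - s) ≤ 0 := Real.log_nonpos (by linarith) (by linarith)
    rw [norm_mul]
    have h1 : ‖Complex.exp (-x)‖ = Real.exp (-x.re) := by
      rw [Complex.norm_exp, Complex.neg_re]
    have h2 : ‖(x - ((Real.log (1 - s):ℝ):ℂ))⁻¹‖ ≤ ‖x‖⁻¹ := by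
      rw [norm_inv]
      apply inv_anti₀ (by simpa using hx)
      have h3 : x - ((Real.log (1 - s):ℝ):ℂ) = x + ((-Real.log (1 - s) : ℝ) : ℂ) := by
        push_cast; ring
      rw [h3]
      exact aux_norm_le x hre (by linarith)
    rw [h1]
    exact mul_le_mul_of_nonneg_left h2 (Real.exp_pos _).le

noncomputable def FF (x : ℂ) (T : ℝ) : ℂ := -x⁻¹ * ((T:ℂ)⁻¹ * Complex.exp (-(x*T)))

lemma aux_FF_deriv (x : ℂ) (hx : x ≠ 0) {t : ℝ} (ht : 0 < t) :
    HasDerivAt (FF x)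
      ((t:ℂ)⁻¹ * Complex.exp (-(x*t)) + x⁻¹ * (((t:ℂ)^2)⁻¹ * Complex.exp (-(x*t)))) t := by
  have ht0 : ((t:ℝ):ℂ) ≠ 0 := by
    simpa using ne_of_gt ht
  have h1 : HasDerivAt (fun t : ℝ => ((t:ℝ):ℂ)⁻¹) (-(((t:ℝ):ℂ)^2)⁻¹) t :=
    (hasDerivAt_inv ht0).comp_ofReal
  have h2 := aux_cexp_deriv x t
  have h3 := (h1.mul h2).const_mul (-x⁻¹)
  refine h3.congr_deriv ?_
  have hx' : x⁻¹ * x = 1 := inv_mul_cancel₀ hx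
  linear_combination ((((t:ℝ):ℂ))⁻¹ * Complex.exp (-(x*t))) * hx'

lemma aux_C2_integrableOn (x : ℂ) (hre : 0 ≤ x.re) :
    IntegrableOn (fun t : ℝ => ((t:ℂ)^2)⁻¹ * Complex.exp (-(x*t))) (Ioi 1) := by
  have hrp : IntegrableOn (fun t : ℝ => t ^ (-2:ℝ)) (Ioi 1) :=
    integrableOn_Ioi_rpow_of_lt (by norm_num) one_pos
  apply MeasureTheory.Integrable.mono' hrp
  · apply ContinuousOn.aestronglyMeasurable ?_ measurableSet_Ioi
    apply ContinuousOn.mul ?_ (by fun_prop)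
    apply ContinuousOn.inv₀ (by fun_prop)
    intro t ht
    have h0 : (0:ℝ) < t := lt_trans one_pos (mem_Ioi.mp ht)
    simp only [ne_eq, pow_eq_zero_iff]
    simpa using ne_of_gt h0
  · filter_upwards [ae_restrict_mem measurableSet_Ioi] with t ht
    have ht1 : (1:ℝ) < t := mem_Ioi.mp ht
    have ht0 : (0:ℝ) < t := lt_trans one_pos ht1
    have h2 : t ^ (-2:ℝ) = (t^2)⁻¹ := by
      rw [Real.rpow_neg ht0.le]
      norm_num [Real.rpow_natCast]
    rw [norm_mul, h2]
    have h3 : ‖(((t:ℝ):ℂ)^2)⁻¹‖ = (t^2)⁻¹ := by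
      rw [norm_inv, norm_pow, Complex.norm_real, Real.norm_eq_abs, abs_of_pos ht0]
    have h4 : ‖Complex.exp (-(x*t))‖ ≤ 1 := by
      rw [Complex.norm_exp]
      apply Real.exp_le_one_iff.mpr
      simp only [Complex.neg_re, Complex.mul_re, Complex.ofReal_re, Complex.ofReal_im]
      nlinarith
    rw [h3]
    calc (t^2)⁻¹ * ‖Complex.exp (-(x*t))‖ ≤ (t^2)⁻¹ * 1 :=
          mul_le_mul_of_nonneg_left h4 (by positivity)
      _ = (t^2)⁻¹ := mul_one _

lemma aux_parts (x : ℂ) (hx : x ≠ 0) :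
    ∀ T, 1 ≤ T → ∫ t in (1:ℝ)..T, (t:ℂ)⁻¹ * Complex.exp (-(x*t)) =
      FF x T - FF x 1 - x⁻¹ * ∫ t in (1:ℝ)..T, ((t:ℂ)^2)⁻¹ * Complex.exp (-(x*t)) := by
  intro T hT
  have hpos : ∀ t ∈ uIcc (1:ℝ) T, (0:ℝ) < t := by
    rw [uIcc_of_le hT]
    intro t ht
    linarith [ht.1]
  have hcont1 : ContinuousOn (fun t : ℝ => ((t:ℝ):ℂ)⁻¹ * Complex.exp (-(x*t))) (uIcc 1 T) := by
    apply ContinuousOn.mul ?_ (by fun_prop)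
    apply ContinuousOn.inv₀ (by fun_prop)
    intro t ht
    simpa using ne_of_gt (hpos t ht)
  have hcont2 : ContinuousOn (fun t : ℝ => x⁻¹ * ((((t:ℝ):ℂ)^2)⁻¹ * Complex.exp (-(x*t))))
      (uIcc 1 T) := by
    apply ContinuousOn.mul continuousOn_const
    apply ContinuousOn.mul ?_ (by fun_prop)
    apply ContinuousOn.inv₀ (by fun_prop)
    intro t ht
    simp only [ne_eq, pow_eq_zero_iff]
    simpa using ne_of_gt (hpos t ht)
  have hI1 := hcont1.intervalIntegrable (μ := volume)
  have hI2 := hcont2.intervalIntegrable (μ := volume)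
  have hFTC := intervalIntegral.integral_eq_sub_of_hasDerivAt
    (f := FF x) (fun t ht => aux_FF_deriv x hx (hpos t ht)) (hI1.add hI2)
  rw [intervalIntegral.integral_add hI1 hI2, intervalIntegral.integral_const_mul] at hFTC
  linear_combination hFTC

lemma aux_tendsto_FF (x : ℂ) (hre : 0 ≤ x.re) :
    Tendsto (FF x) atTop (𝓝 0) := by
  have hg : Tendsto (fun T : ℝ => ‖x⁻¹‖ * T⁻¹) atTop (𝓝 0) := by
    simpa using tendsto_inv_atTop_zero.const_mul ‖x⁻¹‖
  apply squeeze_zero_norm' ?_ hg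
  filter_upwards [eventually_ge_atTop (1:ℝ)] with T hT
  have hT0 : (0:ℝ) < T := lt_of_lt_of_le one_pos hT
  have h1 : ‖FF x T‖ = ‖x⁻¹‖ * (T⁻¹ * Real.exp (-(x.re * T))) := by
    rw [FF, norm_mul, norm_neg]
    congr 1
    rw [norm_mul, norm_inv, Complex.norm_real, Real.norm_eq_abs, abs_of_pos hT0,
      Complex.norm_exp]
    congr 1
    simp [Complex.mul_re]
  rw [h1]
  have h2 : Real.exp (-(x.re * T)) ≤ 1 := Real.exp_le_one_iff.mpr (by nlinarith)
  have h3 : T⁻¹ * Real.exp (-(x.re * T)) ≤ T⁻¹ * 1 :=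
    mul_le_mul_of_nonneg_left h2 (by positivity)
  calc ‖x⁻¹‖ * (T⁻¹ * Real.exp (-(x.re*T))) ≤ ‖x⁻¹‖ * (T⁻¹ * 1) :=
        mul_le_mul_of_nonneg_left h3 (norm_nonneg _)
    _ = ‖x⁻¹‖ * T⁻¹ := by ring

/-- **Representation of the exponential integral `E₁`** (eq. (11) of Pinamonti–Siemssen):
for complex `x` with `Re x ≥ 0`, `x ≠ 0`, the improper integral `∫₁^∞ t⁻¹ e^{−xt} dt`
converges (as the limit of `∫₁^T` for `T → ∞`) and equals
`∫₀¹ e^{−x} (x − ln(1−s))⁻¹ ds`; both expressions equal `E₁(x)`. -/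
theorem exponential_integral_representation (x : ℂ) (hre : 0 ≤ x.re) (hx : x ≠ 0) :
    IntervalIntegrable
        (fun s : ℝ => Complex.exp (-x) * (x - ((Real.log (1 - s) : ℝ) : ℂ))⁻¹)
        MeasureTheory.volume 0 1 ∧
      Tendsto (fun T : ℝ => ∫ t in (1:ℝ)..T, ((t : ℂ))⁻¹ * Complex.exp (-x * (t : ℂ)))
        atTop
        (𝓝 (∫ s in (0:ℝ)..1, Complex.exp (-x) * (x - ((Real.log (1 - s) : ℝ) : ℂ))⁻¹)) := by
  refine ⟨aux_intervalIntegrable x hre hx, ?_⟩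
  have hC := aux_C x hre hx
  have hsubst := aux_subst x hre hx
  have htendI : Tendsto (fun T : ℝ => ∫ t in (1:ℝ)..T, ((t:ℂ)^2)⁻¹ * Complex.exp (-(x*t)))
      atTop (𝓝 (∫ t in Ioi (1:ℝ), ((t:ℂ)^2)⁻¹ * Complex.exp (-(x*t)))) :=
    intervalIntegral_tendsto_integral_Ioi 1 (aux_C2_integrableOn x hre) tendsto_id
  have htendF := aux_tendsto_FF x hre
  have hcomb : Tendsto (fun T : ℝ => FF x T - FF x 1 -
      x⁻¹ * ∫ t in (1:ℝ)..T, ((t:ℂ)^2)⁻¹ * Complex.exp (-(x*t))) atTop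
      (𝓝 ((0:ℂ) - FF x 1 - x⁻¹ * ∫ t in Ioi (1:ℝ), ((t:ℂ)^2)⁻¹ * Complex.exp (-(x*t)))) :=
    (htendF.sub tendsto_const_nhds).sub (htendI.const_mul x⁻¹)
  have hfinal : (0:ℂ) - FF x 1 - x⁻¹ * ∫ t in Ioi (1:ℝ), ((t:ℂ)^2)⁻¹ * Complex.exp (-(x*t))
      = ∫ s in (0:ℝ)..1, Complex.exp (-x) * (x - ((Real.log (1 - s) : ℝ) : ℂ))⁻¹ := by
    rw [hC, hsubst, FF]
    push_cast
    field_simp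
    ring
  rw [← hfinal]
  apply hcomb.congr'
  filter_upwards [eventually_ge_atTop (1:ℝ)] with T hT
  rw [← aux_parts x hx T hT]
  simp only [neg_mul]
end
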